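/- arXiv:1011.1945 — 11 statements merged into one kernel-verified Lean document; each statement's English description precedes it below -/
import Mathlib

section
/- For any partition λ and any positive integers m and k, if λ is a k-core then λ is also an mk-core. Equivalently, if c is a hook length of λ, then every divisor of c is also a hook length of λ. -/
/-- A partition represented as a weakly decreasing list of positive parts. -/
def IsPartitionList (l : List ℕ) : Prop :=
  l.Pairwise (· ≥ ·) ∧ ∀ p ∈ l, 0 < p

/-- Hook length of the cell in row `i`, column `j` (both 0-indexed). -/
def hookLen (l : List ℕ) (i j : ℕ) : ℕ :=
  (l.getD i 0 - j) + (l.drop (i + 1)).countP (fun a => decide (j < a))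

/-- The hookset of a partition: the set of its hook lengths. -/
def hookset (l : List ℕ) : Set ℕ :=
  {h | ∃ i j, i < l.length ∧ j < l.getD i 0 ∧ h = hookLen l i j}

/-- `l` is a `t`-core: no hook length of `l` is divisible by `t`. -/
def IsCore (l : List ℕ) (t : ℕ) : Prop := ∀ h ∈ hookset l, ¬ t ∣ h

/-- A numerical set: contains 0 and has finite complement in ℕ. -/
def NumericalSet (S : Set ℕ) : Prop := 0 ∈ S ∧ Sᶜ.Finite

/-- The atom monoid of a numerical set. -/
def atomMonoid (S : Set ℕ) : Set ℕ := {n | ∀ s ∈ S, n + s ∈ S}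

/-- The set of positions of east steps of the profile of the partition `l`
(step `i` is north exactly when `i = l[a] + (length - 1 - a)` for some row `a`). -/
def pathSet (l : List ℕ) : Set ℕ :=
  {i | ¬ ∃ a, a < l.length ∧ i = l.getD a 0 + (l.length - 1 - a)}

/-- The staircase partition `(k, k-1, ..., 2, 1)`. -/
def staircase (k : ℕ) : List ℕ := (List.range k).reverse.map (· + 1)


section CoreAux

lemma countP_eq_card_filter_range' (l : List ℕ) (p : ℕ → Bool) :
    l.countP p = ((Finset.range l.length).filter (fun a => p (l.getD a 0) = true)).card := by
  induction l with
  | nil => simp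
  | cons x l ih =>
    rw [List.countP_cons]
    simp only [List.length_cons]
    rw [Finset.card_filter, Finset.sum_range_succ']
    simp only [List.getD_cons_succ, List.getD_cons_zero]
    rw [← Finset.card_filter, ih]

lemma getD_drop' (l : List ℕ) (n a : ℕ) : (l.drop n).getD a 0 = l.getD (n + a) 0 := by
  rw [List.getD_eq_getElem?_getD, List.getD_eq_getElem?_getD, List.getElem?_drop]

lemma hookLen_eq (l : List ℕ) (i j : ℕ) :
    hookLen l i j = (l.getD i 0 - j) +
      ((Finset.Ico (i+1) l.length).filter (fun a => j < l.getD a 0)).card := by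
  unfold hookLen
  congr 1
  rw [countP_eq_card_filter_range', List.length_drop]
  rw [Finset.card_filter, Finset.card_filter, Finset.sum_Ico_eq_sum_range]
  apply Finset.sum_congr rfl
  intro a _
  rw [getD_drop']
  simp

/-- Beta numbers (first-column hook lengths shifted). -/
def beta' (l : List ℕ) (a : ℕ) : ℕ := l.getD a 0 + (l.length - 1 - a)

lemma lam_anti (l : List ℕ) (hl : IsPartitionList l) {a b : ℕ} (hab : a ≤ b)
    (hb : b < l.length) : l.getD b 0 ≤ l.getD a 0 := by
  rcases eq_or_lt_of_le hab with rfl | h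
  · exact le_refl _
  · have ha : a < l.length := lt_trans h hb
    rw [List.getD_eq_getElem l 0 ha, List.getD_eq_getElem l 0 hb]
    exact List.pairwise_iff_getElem.mp hl.1 a b ha hb h

lemma lam_pos (l : List ℕ) (hl : IsPartitionList l) {a : ℕ} (ha : a < l.length) :
    0 < l.getD a 0 := by
  rw [List.getD_eq_getElem l 0 ha]
  exact hl.2 _ (List.getElem_mem ha)

lemma beta_chain (l : List ℕ) (hl : IsPartitionList l) {a b : ℕ} (hab : a ≤ b)
    (hb : b < l.length) : beta' l b + (b - a) ≤ beta' l a := by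
  have h1 := lam_anti l hl hab hb
  unfold beta'
  omega

lemma hook_to_beta (l : List ℕ) (hl : IsPartitionList l) {i j : ℕ}
    (hi : i < l.length) (hj : j < l.getD i 0) :
    ∃ x, (∀ a, a < l.length → beta' l a ≠ x) ∧ x + hookLen l i j = beta' l i := by
  set c' := ((Finset.Ico (i+1) l.length).filter (fun a => l.getD a 0 ≤ j)).card with hc'
  set cnt := ((Finset.Ico (i+1) l.length).filter (fun a => j < l.getD a 0)).card with hcnt
  have hsplit : cnt + c' = l.length - (i + 1) := by
    have := Finset.card_filter_add_card_filter_not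
      (s := Finset.Ico (i+1) l.length) (p := fun a => j < l.getD a 0)
    rw [Nat.card_Ico] at this
    have he : (Finset.Ico (i+1) l.length).filter (fun a => ¬ j < l.getD a 0)
        = (Finset.Ico (i+1) l.length).filter (fun a => l.getD a 0 ≤ j) := by
      apply Finset.filter_congr
      intro a _
      simp [Nat.not_lt]
    rw [he] at this
    omega
  have hsum : (j + c') + hookLen l i j = beta' l i := by
    rw [hookLen_eq]
    unfold beta'
    omega
  refine ⟨j + c', ?_, hsum⟩
  intro a ha heq
  have hpos : 0 < hookLen l i j := by
    rw [hookLen_eq]; omega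
  have hxlt : j + c' < beta' l i := by omega
  rcases le_or_gt a i with hle | hgt
  · have := beta_chain l hl hle hi
    omega
  · by_cases hla : l.getD a 0 ≤ j
    · have hsub : Finset.Ico a l.length ⊆ (Finset.Ico (i+1) l.length).filter (fun a => l.getD a 0 ≤ j) := by
        intro b hb
        rw [Finset.mem_Ico] at hb
        rw [Finset.mem_filter, Finset.mem_Ico]
        exact ⟨⟨by omega, hb.2⟩, le_trans (lam_anti l hl hb.1 hb.2) hla⟩
      have hcard : l.length - a ≤ c' := by
        rw [hc']
        calc l.length - a = (Finset.Ico a l.length).card := (Nat.card_Ico a l.length).symm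
          _ ≤ _ := Finset.card_le_card hsub
      unfold beta' at heq
      omega
    · have hsub : (Finset.Ico (i+1) l.length).filter (fun a => l.getD a 0 ≤ j) ⊆ Finset.Ico (a+1) l.length := by
        intro b hb
        rw [Finset.mem_filter, Finset.mem_Ico] at hb
        rw [Finset.mem_Ico]
        refine ⟨?_, hb.1.2⟩
        by_contra hba
        exact hla (le_trans (lam_anti l hl (show b ≤ a by omega) ha) hb.2)
      have hcard : c' ≤ l.length - (a + 1) := by
        rw [hc']
        calc _ ≤ (Finset.Ico (a+1) l.length).card := Finset.card_le_card hsub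
          _ = l.length - (a+1) := Nat.card_Ico _ _
      unfold beta' at heq
      omega
lemma beta_to_hook (l : List ℕ) (hl : IsPartitionList l) {i x h : ℕ}
    (hi : i < l.length) (hx : ∀ a, a < l.length → beta' l a ≠ x)
    (hpos : 0 < h) (hsum : x + h = beta' l i) : h ∈ hookset l := by
  classical
  set F := (Finset.range l.length).filter (fun a => beta' l a < x) with hF
  set c := F.card with hc
  have hbix : x < beta' l i := by omega
  -- membership description of F
  have hmem : ∀ a, a ∈ F ↔ (l.length - c ≤ a ∧ a < l.length) := by
    by_cases hne : F.Nonempty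
    · set m := F.min' hne with hm
      have hmF : m ∈ F := F.min'_mem hne
      have hmr : m < l.length := by
        have := hmF; rw [hF, Finset.mem_filter, Finset.mem_range] at this; exact this.1
      have hmx : beta' l m < x := by
        have := hmF; rw [hF, Finset.mem_filter] at this; exact this.2
      have hFeq : F = Finset.Ico m l.length := by
        apply Finset.Subset.antisymm
        · intro a haF
          rw [Finset.mem_Ico]
          have h1 : m ≤ a := Finset.min'_le F a haF
          have h2 : a < l.length := by
            rw [hF, Finset.mem_filter, Finset.mem_range] at haF; exact haF.1
          exact ⟨h1, h2⟩
        · intro b hb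
          rw [Finset.mem_Ico] at hb
          rw [hF, Finset.mem_filter, Finset.mem_range]
          refine ⟨hb.2, ?_⟩
          have := beta_chain l hl hb.1 hb.2
          omega
      have hcval : c = l.length - m := by rw [hc, hFeq, Nat.card_Ico]
      intro a
      rw [hFeq, Finset.mem_Ico]
      omega
    · rw [Finset.not_nonempty_iff_eq_empty] at hne
      have hc0 : c = 0 := by rw [hc, hne]; simp
      intro a
      rw [hne]
      simp
      omega
  have hcr : c ≤ l.length - 1 - i := by
    have hsub : F ⊆ Finset.Ico (i+1) l.length := by
      intro a haF
      have ha : a < l.length := ((hmem a).mp haF).2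
      rw [Finset.mem_Ico]
      refine ⟨?_, ha⟩
      by_contra hba
      have : beta' l a < x := by
        rw [hF, Finset.mem_filter] at haF; exact haF.2
      have h2 := beta_chain l hl (show a ≤ i by omega) hi
      omega
    calc c ≤ (Finset.Ico (i+1) l.length).card := Finset.card_le_card hsub
      _ = l.length - (i+1) := Nat.card_Ico _ _
      _ ≤ l.length - 1 - i := by omega
  have hcx : c ≤ x := by
    rcases Nat.eq_zero_or_pos c with h0 | hcpos
    · omega
    · have hcr' : c ≤ l.length := by
        rw [hc, hF]
        calc F.card ≤ (Finset.range l.length).card := Finset.card_le_card (Finset.filter_subset _ _)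
          _ = l.length := Finset.card_range _
      have hmemF : (l.length - c) ∈ F := by
        rw [hmem]; omega
      have hbx : beta' l (l.length - c) < x := by
        rw [hF, Finset.mem_filter] at hmemF; exact hmemF.2
      have hch := beta_chain l hl (show l.length - c ≤ l.length - 1 by omega)
        (show l.length - 1 < l.length by omega)
      have hlp : 0 < l.getD (l.length - 1) 0 := lam_pos l hl (by omega)
      unfold beta' at hch hbx
      omega
  -- the key equivalence
  have hkey : ∀ a, i ≤ a → a < l.length → (l.getD a 0 ≤ x - c ↔ beta' l a < x) := by
    intro a hia ha
    constructor
    · intro hla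
      by_contra hnot
      push_neg at hnot
      have hne : beta' l a ≠ x := hx a ha
      -- a ∉ F, so a < l.length - c
      have haF : a ∉ F := by
        rw [hF, Finset.mem_filter]
        push_neg
        intro _
        omega
      have halt : a < l.length - c := by
        rw [hmem] at haF
        push_neg at haF
        omega
      -- m - 1 where m = l.length - c is not in F
      have hm1 : l.length - c - 1 ∉ F := by
        rw [hmem]; push_neg; intro h1; omega
      have hm1r : l.length - c - 1 < l.length := by omega
      have hm1x : x < beta' l (l.length - c - 1) := by
        rw [hF, Finset.mem_filter, Finset.mem_range] at hm1
        push_neg at hm1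
        have := hm1 hm1r
        have := hx _ hm1r
        omega
      have hch := beta_chain l hl (show a ≤ l.length - c - 1 by omega) hm1r
      unfold beta' at hch hm1x
      omega
    · intro hba
      have haF : a ∈ F := by
        rw [hF, Finset.mem_filter, Finset.mem_range]; exact ⟨ha, hba⟩
      have hage : l.length - c ≤ a := ((hmem a).mp haF).1
      have hcpos : 0 < c := by
        by_contra h0
        push_neg at h0
        interval_cases c
        simp [hmem] at haF
        omega
      have hmemM : (l.length - c) ∈ F := by rw [hmem]; omega
      have hbmx : beta' l (l.length - c) < x := by
        rw [hF, Finset.mem_filter] at hmemM; exact hmemM.2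
      have hch := beta_chain l hl hage ha
      unfold beta' at hch hbmx
      omega
  -- conclude
  set j := x - c with hj
  have hjlt : j < l.getD i 0 := by
    have := hkey i (le_refl i) hi
    omega
  refine ⟨i, j, hi, hjlt, ?_⟩
  rw [hookLen_eq]
  have hfeq : (Finset.Ico (i+1) l.length).filter (fun a => ¬ j < l.getD a 0) = F := by
    apply Finset.ext
    intro a
    rw [Finset.mem_filter, Finset.mem_Ico, hF, Finset.mem_filter, Finset.mem_range]
    constructor
    · rintro ⟨⟨h1, h2⟩, h3⟩
      refine ⟨h2, ?_⟩
      have := (hkey a (by omega) h2).mp (by omega)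
      exact this
    · rintro ⟨h1, h2⟩
      have hia : i + 1 ≤ a := by
        by_contra hba
        have := beta_chain l hl (show a ≤ i by omega) hi
        omega
      have := (hkey a (by omega) h1).mpr h2
      exact ⟨⟨hia, h1⟩, by omega⟩
  have hsplit := Finset.card_filter_add_card_filter_not
      (s := Finset.Ico (i+1) l.length) (p := fun a => j < l.getD a 0)
  rw [hfeq, Nat.card_Ico] at hsplit
  unfold beta' at hsum
  omega

lemma chain_step (B : ℕ → Prop) (d : ℕ) :
    ∀ m x, ¬ B x → B (x + d * m) → ∃ y, ¬ B y ∧ B (y + d) := by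
  intro m
  induction m with
  | zero => intro x hx hB; simp at hB; exact absurd hB hx
  | succ m ih =>
    intro x hx hB
    by_cases hmid : B (x + d * m)
    · exact ih x hx hmid
    · refine ⟨x + d * m, hmid, ?_⟩
      have he : x + d * (m + 1) = x + d * m + d := by ring
      rw [he] at hB
      exact hB

lemma hookset_pos (l : List ℕ) {c : ℕ} (hc : c ∈ hookset l) : 0 < c := by
  obtain ⟨i, j, hi, hj, hch⟩ := hc
  rw [hch, hookLen_eq]
  omega

lemma divisor_mem (l : List ℕ) (hl : IsPartitionList l) {c : ℕ} (hc : c ∈ hookset l)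
    {d : ℕ} (hd : d ∣ c) : d ∈ hookset l := by
  have hcpos : 0 < c := hookset_pos l hc
  have hdpos : 0 < d := Nat.pos_of_dvd_of_pos hd hcpos
  obtain ⟨i, j, hi, hj, hch⟩ := hc
  obtain ⟨x, hx, hsum⟩ := hook_to_beta l hl hi hj
  obtain ⟨m, hm⟩ := hd
  have hB : (fun y => ∃ a, a < l.length ∧ beta' l a = y) (x + d * m) := by
    refine ⟨i, hi, ?_⟩
    rw [← hch] at hsum
    omega
  have hnB : ¬ (fun y => ∃ a, a < l.length ∧ beta' l a = y) x := by
    rintro ⟨a, ha, hba⟩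
    exact hx a ha hba
  obtain ⟨y, hy, hyd⟩ := chain_step (fun y => ∃ a, a < l.length ∧ beta' l a = y) d m x hnB hB
  obtain ⟨a, ha, hba⟩ := hyd
  exact beta_to_hook l hl (x := y) (h := d) ha
    (fun a' ha' hba' => hy ⟨a', ha', hba'⟩) hdpos hba.symm

end CoreAux

theorem stmt0 :
    (∀ l : List ℕ, IsPartitionList l → ∀ m k : ℕ, 0 < m → 0 < k →
      IsCore l k → IsCore l (m * k)) ∧
    (∀ l : List ℕ, IsPartitionList l → ∀ c ∈ hookset l, ∀ d : ℕ, d ∣ c →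
      d ∈ hookset l) := by
  constructor
  · intro l _ m k _ _ hcore h hh hdvd
    exact hcore h hh (dvd_trans (dvd_mul_left k m) hdvd)
  · intro l hl c hc d hd
    exact divisor_mem l hl hc hd
end

section
/- The hookset of the staircase partition (k, k-1, ..., 2, 1) is exactly the set of odd numbers {1, 3, 5, ..., 2k-1}. -/
lemma staircase_succ (k : ℕ) : staircase (k+1) = (k+1) :: staircase k := by
  simp [staircase, List.range_succ]

lemma staircase_length (k : ℕ) : (staircase k).length = k := by
  induction k with
  | zero => rfl
  | succ n ih => rw [staircase_succ]; simp [ih]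

lemma staircase_getD (k i : ℕ) : (staircase k).getD i 0 = k - i := by
  induction k generalizing i with
  | zero => simp [staircase]
  | succ n ih =>
    rw [staircase_succ]
    cases i with
    | zero => simp
    | succ m =>
      rw [List.getD_cons_succ, ih, Nat.succ_sub_succ]

lemma staircase_drop (k n : ℕ) : (staircase k).drop n = staircase (k - n) := by
  induction k generalizing n with
  | zero => simp [staircase]
  | succ m ih =>
    cases n with
    | zero => simp
    | succ p => rw [staircase_succ]; simp [ih, Nat.succ_sub_succ]

lemma staircase_countP (m j : ℕ) :
    (staircase m).countP (fun a => decide (j < a)) = m - j := by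
  induction m with
  | zero => simp [staircase]
  | succ n ih =>
    rw [staircase_succ, List.countP_cons, ih]
    by_cases h : j < n + 1 <;> simp [h] <;> omega

theorem stmt2 (k : ℕ) :
    hookset (staircase k) = {h | Odd h ∧ h ≤ 2 * k - 1} := by
  ext h
  simp only [hookset, Set.mem_setOf_eq, staircase_length, staircase_getD]
  constructor
  · rintro ⟨i, j, hi, hj, rfl⟩
    unfold hookLen
    rw [staircase_getD, staircase_drop, staircase_countP]
    constructor
    · exact ⟨k - i - j - 1, by omega⟩
    · omega
  · rintro ⟨⟨n, rfl⟩, hle⟩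
    refine ⟨0, k - (n+1), by omega, by omega, ?_⟩
    unfold hookLen
    rw [staircase_getD, staircase_drop, staircase_countP]
    omega
end

section
/- Under the bijection φ from numerical sets to partitions, the hookset of φ(S) equals the complement (in the positive integers) of the atom monoid A(S). In particular, φ(S) is a k-core if and only if k ∈ A(S). -/
/-- count of elements > j in a sorted-decreasing list: lower bound. -/
theorem cnt_lower (l : List ℕ) (hl : l.Pairwise (· ≥ ·)) (j b : ℕ)
    (hb : b < l.length) (hj : j < l.getD b 0) :
    b < l.countP (fun a => decide (j < a)) := by
  induction l generalizing b with
  | nil => simp at hb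
  | cons x xs ih =>
    rw [List.pairwise_cons] at hl
    rw [List.countP_cons]
    cases b with
    | zero =>
      simp only [List.getD_cons_zero] at hj
      simp [hj]
    | succ b =>
      simp only [List.getD_cons_succ] at hj
      simp only [List.length_cons, Nat.succ_lt_succ_iff] at hb
      have h1 := ih hl.2 b hb hj
      have hmem : xs.getD b 0 ∈ xs := by
        rw [List.getD_eq_getElem _ _ hb]; exact List.getElem_mem _
      have : j < x := lt_of_lt_of_le hj (hl.1 _ hmem)
      simp [this]; omega

theorem cnt_upper (l : List ℕ) (hl : l.Pairwise (· ≥ ·)) (j b : ℕ)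
    (hb : b < l.length) (hj : l.getD b 0 ≤ j) :
    l.countP (fun a => decide (j < a)) ≤ b := by
  induction l generalizing b with
  | nil => simp at hb
  | cons x xs ih =>
    rw [List.pairwise_cons] at hl
    rw [List.countP_cons]
    cases b with
    | zero =>
      simp only [List.getD_cons_zero] at hj
      have : xs.countP (fun a => decide (j < a)) = 0 := by
        rw [List.countP_eq_zero]
        intro a ha
        have := hl.1 a ha
        simp; omega
      simp [this]; omega
    | succ b =>
      simp only [List.getD_cons_succ] at hj
      simp only [List.length_cons, Nat.succ_lt_succ_iff] at hb
      have h1 := ih hl.2 b hb hj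
      have : (if (decide (j < x)) = true then 1 else 0) ≤ 1 := by split <;> omega
      omega

theorem cnt_iff (l : List ℕ) (hl : l.Pairwise (· ≥ ·)) (j b : ℕ) (hb : b < l.length) :
    (j < l.getD b 0 ↔ b < l.countP (fun a => decide (j < a))) := by
  constructor
  · exact cnt_lower l hl j b hb
  · intro h
    by_contra hc
    have := cnt_upper l hl j b hb (by omega)
    omega

/-- splitting the count at row i when j < l[i] -/
theorem cnt_split (l : List ℕ) (hl : l.Pairwise (· ≥ ·)) (i j : ℕ)
    (hi : i < l.length) (hj : j < l.getD i 0) :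
    l.countP (fun a => decide (j < a)) =
      (i + 1) + (l.drop (i + 1)).countP (fun a => decide (j < a)) := by
  induction l generalizing i with
  | nil => simp at hi
  | cons x xs ih =>
    rw [List.pairwise_cons] at hl
    rw [List.countP_cons]
    cases i with
    | zero =>
      simp only [List.getD_cons_zero] at hj
      simp [hj]; omega
    | succ i =>
      simp only [List.getD_cons_succ] at hj
      simp only [List.length_cons, Nat.succ_lt_succ_iff] at hi
      have h1 := ih hl.2 i hi hj
      have hmem : xs.getD i 0 ∈ xs := by
        rw [List.getD_eq_getElem _ _ hi]; exact List.getElem_mem _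
      have : j < x := lt_of_lt_of_le hj (hl.1 _ hmem)
      simp only [List.drop_succ_cons]
      simp [this]; omega
theorem getD_anti (l : List ℕ) (hl : l.Pairwise (· ≥ ·)) (b0 b1 : ℕ)
    (h : b0 ≤ b1) (hb1 : b1 < l.length) : l.getD b1 0 ≤ l.getD b0 0 := by
  induction l generalizing b0 b1 with
  | nil => simp at hb1
  | cons x xs ih =>
    rw [List.pairwise_cons] at hl
    cases b0 with
    | zero =>
      cases b1 with
      | zero => exact le_refl _
      | succ b1 =>
        simp only [List.getD_cons_succ, List.getD_cons_zero]
        simp only [List.length_cons, Nat.succ_lt_succ_iff] at hb1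
        have hmem : xs.getD b1 0 ∈ xs := by
          rw [List.getD_eq_getElem _ _ hb1]; exact List.getElem_mem _
        exact hl.1 _ hmem
    | succ b0 =>
      cases b1 with
      | zero => omega
      | succ b1 =>
        simp only [List.getD_cons_succ]
        simp only [List.length_cons, Nat.succ_lt_succ_iff] at hb1
        exact ih hl.2 b0 b1 (by omega) hb1

/-- the north step of row `b1` is strictly below that of row `b0 ≤ b1`. -/
theorem north_pair (l : List ℕ) (hl : l.Pairwise (· ≥ ·)) (b0 b1 : ℕ)
    (h : b0 ≤ b1) (hb1 : b1 < l.length) :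
    l.getD b1 0 + (l.length - 1 - b1) + (b1 - b0) ≤ l.getD b0 0 + (l.length - 1 - b0) := by
  have := getD_anti l hl b0 b1 h hb1
  omega

/-- east steps are not north steps. -/
theorem E_ne (l : List ℕ) (hl : l.Pairwise (· ≥ ·)) (j a : ℕ) (ha : a < l.length) :
    j + (l.length - l.countP (fun x => decide (j < x))) ≠
      l.getD a 0 + (l.length - 1 - a) := by
  have hc : l.countP (fun x => decide (j < x)) ≤ l.length := l.countP_le_length (p := fun x => decide (j < x))
  by_cases hja : j < l.getD a 0
  · have := (cnt_iff l hl j a ha).mp hja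
    omega
  · have := fun h => (cnt_iff l hl j a ha).mpr h
    have h2 : ¬ (a < l.countP (fun x => decide (j < x))) := fun h => hja (this h)
    omega

theorem hook_id (l : List ℕ) (hl : l.Pairwise (· ≥ ·)) (i j : ℕ)
    (hi : i < l.length) (hj : j < l.getD i 0) :
    hookLen l i j + (j + (l.length - l.countP (fun a => decide (j < a)))) =
      l.getD i 0 + (l.length - 1 - i) := by
  have hsplit := cnt_split l hl i j hi hj
  have hd : (l.drop (i + 1)).countP (fun a => decide (j < a)) ≤ l.length - (i + 1) := by
    have := (l.drop (i + 1)).countP_le_length (p := fun a => decide (j < a))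
    rwa [List.length_drop] at this
  unfold hookLen
  omega

theorem key (l : List ℕ) (hl : l.Pairwise (· ≥ ·)) (hpos : ∀ p ∈ l, 0 < p) (s : ℕ)
    (hs : ¬∃ a, a < l.length ∧ s = l.getD a 0 + (l.length - 1 - a)) :
    ∃ j, j + (l.length - l.countP (fun x => decide (j < x))) = s ∧
      ∀ b, b < l.length → s < l.getD b 0 + (l.length - 1 - b) → j < l.getD b 0 := by
  push_neg at hs
  by_cases hex : ∃ b, b < l.length ∧ l.getD b 0 + (l.length - 1 - b) < s
  · have hspec := Nat.find_spec hex
    set t := Nat.find hex with hteq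
    obtain ⟨htm, hts⟩ := hspec
    have hchar : ∀ b, b < l.length → ((l.getD b 0 + (l.length - 1 - b) < s) ↔ t ≤ b) := by
      intro b hb
      constructor
      · intro h
        by_contra hbt
        exact Nat.find_min hex (by omega) ⟨hb, h⟩
      · intro h
        have := north_pair l hl t b h hb
        omega
    have hpt : 0 < l.getD t 0 := by
      apply hpos
      rw [List.getD_eq_getElem _ _ htm]; exact List.getElem_mem _
    have hmt : l.length - t ≤ s := by omega
    have hclaim : ∀ b, b < l.length → (s - (l.length - t) < l.getD b 0 ↔ b < t) := by
      intro b hb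
      constructor
      · intro h
        by_contra hbt
        have h1 := north_pair l hl t b (by omega) hb
        omega
      · intro h
        have h1 := north_pair l hl b (t - 1) (by omega) (by omega)
        have h2 : ¬(l.getD (t - 1) 0 + (l.length - 1 - (t - 1)) < s) := by
          rw [hchar (t - 1) (by omega)]; omega
        have h3 := hs (t - 1) (by omega)
        omega
    have hcnt : l.countP (fun x => decide (s - (l.length - t) < x)) = t := by
      have hub : l.countP (fun x => decide (s - (l.length - t) < x)) ≤ t := by
        apply cnt_upper l hl _ t htm
        have := hclaim t htm
        omega
      have hlb : t ≤ l.countP (fun x => decide (s - (l.length - t) < x)) := by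
        rcases Nat.eq_zero_or_pos t with h0 | h0
        · omega
        · have := cnt_lower l hl (s - (l.length - t)) (t - 1) (by omega)
            ((hclaim (t - 1) (by omega)).mpr (by omega))
          omega
      omega
    refine ⟨s - (l.length - t), by rw [hcnt]; omega, ?_⟩
    intro b hb hsb
    have : ¬ (t ≤ b) := fun h => by have := (hchar b hb).mpr h; omega
    exact (hclaim b hb).mpr (by omega)
  · push_neg at hex
    have hall : ∀ b, b < l.length → s < l.getD b 0 := by
      intro b hb
      have h1 := north_pair l hl b (l.length - 1) (by omega) (by omega)
      have h2 := hex (l.length - 1) (by omega)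
      have h3 := hs (l.length - 1) (by omega)
      omega
    have hcnt : l.countP (fun x => decide (s < x)) = l.length := by
      have hub := l.countP_le_length (p := fun x => decide (s < x))
      rcases Nat.eq_zero_or_pos l.length with h0 | h0
      · omega
      · have := cnt_lower l hl s (l.length - 1) (by omega) (hall (l.length - 1) (by omega))
        omega
    refine ⟨s, by rw [hcnt]; omega, fun b hb _ => hall b hb⟩

theorem stmt4 (l : List ℕ) (S : Set ℕ) (hl : IsPartitionList l)
    (hS : NumericalSet S) (hφ : pathSet l = S) :
    hookset l = {n | 0 < n ∧ n ∉ atomMonoid S} ∧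
    (∀ k : ℕ, 0 < k → (IsCore l k ↔ k ∈ atomMonoid S)) := by
  obtain ⟨hsort, hpos⟩ := hl
  subst hφ
  have h1 : hookset l = {n | 0 < n ∧ n ∉ atomMonoid (pathSet l)} := by
    ext n
    simp only [hookset, Set.mem_setOf_eq]
    constructor
    · rintro ⟨i, j, hi, hj, rfl⟩
      have hpos' : 0 < hookLen l i j := by unfold hookLen; omega
      refine ⟨hpos', ?_⟩
      intro hA
      have hEmem : (j + (l.length - l.countP (fun a => decide (j < a)))) ∈ pathSet l := by
        simp only [pathSet, Set.mem_setOf_eq]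
        rintro ⟨a, ha, heq⟩
        exact E_ne l hsort j a ha heq
      have hmem := hA _ hEmem
      rw [hook_id l hsort i j hi hj] at hmem
      exact hmem ⟨i, hi, rfl⟩
    · rintro ⟨hn, hnA⟩
      simp only [atomMonoid, Set.mem_setOf_eq] at hnA
      push_neg at hnA
      obtain ⟨s, hsS, hns⟩ := hnA
      simp only [pathSet, Set.mem_setOf_eq] at hsS hns
      push_neg at hns
      obtain ⟨a, ha, hna⟩ := hns
      obtain ⟨j, hjE, hjlt⟩ := key l hsort hpos s hsS
      have hja := hjlt a ha (by omega)
      refine ⟨a, j, ha, hja, ?_⟩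
      have hid := hook_id l hsort a j ha hja
      rw [hjE] at hid
      omega
  refine ⟨h1, ?_⟩
  have hmul : ∀ k, k ∈ atomMonoid (pathSet l) → ∀ q, k * q ∈ atomMonoid (pathSet l) := by
    intro k hk q
    induction q with
    | zero => intro s hs; simpa using hs
    | succ q ih =>
      intro s hs
      have := ih (k + s) (hk s hs)
      rw [Nat.mul_succ, add_assoc]
      exact this
  intro k hk0
  constructor
  · intro hcore
    by_contra hkA
    exact hcore k (by rw [h1]; exact ⟨hk0, hkA⟩) dvd_rfl
  · intro hkA h hh hdvd
    rw [h1] at hh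
    obtain ⟨q, rfl⟩ := hdvd
    exact hh.2 (hmul k hkA q)
end

section
/- The complement of the hookset of any partition, within the positive integers, is closed under addition: if neither s nor t is a hook length of λ, then s + t is not a hook length of λ. -/
/-- Number of parts greater than `j`. -/
def Tcount (l : List ℕ) (j : ℕ) : ℕ := l.countP (fun a => decide (j < a))

lemma Tcount_le_length (l : List ℕ) (j : ℕ) : Tcount l j ≤ l.length :=
  List.countP_le_length

lemma Tcount_succ_le (l : List ℕ) (j : ℕ) : Tcount l (j + 1) ≤ Tcount l j := by
  apply List.countP_mono_left
  intro a _ h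
  simp only [decide_eq_true_eq] at *
  omega

lemma countP_drop : ∀ (l : List ℕ), l.Pairwise (· ≥ ·) → ∀ n j,
    (l.drop n).countP (fun a => decide (j < a)) = Tcount l j - n
  | l, _, 0, j => by simp [Tcount]
  | [], _, n+1, j => by simp [Tcount]
  | x :: xs, hl, n+1, j => by
    have ih := countP_drop xs hl.of_cons n j
    simp only [List.drop_succ_cons, Tcount, List.countP_cons] at *
    by_cases hx : j < x
    · simp only [hx, decide_true, if_true] at *
      omega
    · have h0 : xs.countP (fun a => decide (j < a)) = 0 := by
        rw [List.countP_eq_zero]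
        intro a ha
        have := (List.pairwise_cons.mp hl).1 a ha
        simp only [decide_eq_true_eq]
        omega
      simp only [hx, decide_false, Bool.false_eq_true, if_false] at *
      omega

lemma lt_getD_iff : ∀ (l : List ℕ), l.Pairwise (· ≥ ·) → ∀ a, a < l.length → ∀ j,
    (j < l.getD a 0 ↔ a < Tcount l j)
  | [], _, a, ha, j => by simp at ha
  | x :: xs, hl, 0, ha, j => by
    simp only [List.getD_cons_zero, Tcount, List.countP_cons]
    constructor
    · intro h; simp only [h, decide_true, if_true]; omega
    · intro h
      by_contra hx
      have h0 : xs.countP (fun a => decide (j < a)) = 0 := by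
        rw [List.countP_eq_zero]
        intro a ha'
        have := (List.pairwise_cons.mp hl).1 a ha'
        simp only [decide_eq_true_eq]
        omega
      simp [hx, h0] at h
  | x :: xs, hl, a+1, ha, j => by
    simp only [List.length_cons] at ha
    have ih := lt_getD_iff xs hl.of_cons a (by omega) j
    simp only [List.getD_cons_succ, Tcount, List.countP_cons] at *
    constructor
    · intro h
      have hmem : xs.getD a 0 ∈ xs := by
        rw [List.getD_eq_getElem xs 0 (by omega)]
        exact List.getElem_mem _
      have hx : j < x := by
        have := (List.pairwise_cons.mp hl).1 _ hmem
        omega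
      simp [hx]
      omega
    · intro h
      have : a < xs.countP (fun a => decide (j < a)) := by
        by_cases hx : j < x <;> simp [hx] at h <;> omega
      exact ih.mpr this

/-- Membership in the beta-set of `l`. -/
def inB (l : List ℕ) (p : ℕ) : Prop :=
  ∃ a, a < l.length ∧ p = l.getD a 0 + (l.length - 1 - a)

lemma hook_to_pair (l : List ℕ) (hl : IsPartitionList l) {h : ℕ} (hh : h ∈ hookset l) :
    ∃ p, ¬ inB l p ∧ inB l (p + h) := by
  obtain ⟨i, j, hik, hj, rfl⟩ := hh
  set k := l.length with hk
  have hT := lt_getD_iff l hl.1 i hik j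
  have hiT : i < Tcount l j := hT.mp hj
  have hTk : Tcount l j ≤ k := Tcount_le_length l j
  have hdrop : (l.drop (i+1)).countP (fun a => decide (j < a)) = Tcount l j - (i+1) :=
    countP_drop l hl.1 (i+1) j
  refine ⟨j + (k - Tcount l j), ?_, ?_⟩
  · rintro ⟨c, hck, hc⟩
    have hTc := lt_getD_iff l hl.1 c hck j
    by_cases hcT : c < Tcount l j
    · have := hTc.mpr hcT
      omega
    · have : ¬ j < l.getD c 0 := fun h => hcT (hTc.mp h)
      omega
  · refine ⟨i, hik, ?_⟩
    unfold hookLen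
    omega

lemma pair_to_hook (l : List ℕ) (hl : IsPartitionList l) {h : ℕ} (hpos : 0 < h)
    {p : ℕ} (hp : ¬ inB l p) (hph : inB l (p + h)) : h ∈ hookset l := by
  obtain ⟨i, hik, hpi⟩ := hph
  set k := l.length with hk
  have hT0 : Tcount l 0 = k := by
    rw [Tcount, List.countP_eq_length]
    intro a ha
    simpa using hl.2 a ha
  -- find largest j with f j ≤ p, f j := j + (k - Tcount l j)
  have hex : ∃ j, j + (k - Tcount l j) ≤ p ∧ ¬ (j + 1 + (k - Tcount l (j+1)) ≤ p) := by
    by_contra hcon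
    push_neg at hcon
    have key : ∀ j, j + (k - Tcount l j) ≤ p := by
      intro j
      induction j with
      | zero => simp [hT0]
      | succ n ih => exact hcon n ih
    have := key (p + 1)
    omega
  obtain ⟨j, hfj, hgt'⟩ := hex
  have hjp : j ≤ p := by omega
  have hTjk : Tcount l j ≤ k := Tcount_le_length l j
  -- show p = f j
  have hpeq : p = j + (k - Tcount l j) := by
    by_contra hne
    have hlt : j + (k - Tcount l j) < p := by omega
    have hTj1 : Tcount l (j+1) ≤ Tcount l j := Tcount_succ_le l j
    have hgt : p < (j+1) + (k - Tcount l (j+1)) := by omega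
    -- p is in the gap: p = β c with c = j + k - p
    set c := j + k - p with hc
    have hcTj : c < Tcount l j := by omega
    have hcT1 : Tcount l (j+1) ≤ c := by omega
    have hck : c < k := by omega
    have h1 := (lt_getD_iff l hl.1 c hck j).mpr hcTj
    have h2 : ¬ (j + 1 < l.getD c 0) := fun hh =>
      absurd ((lt_getD_iff l hl.1 c hck (j+1)).mp hh) (by omega)
    exact hp ⟨c, hck, by omega⟩
  -- now p = f j; show i < Tcount l j and conclude
  have hiT : i < Tcount l j := by
    by_contra hiT
    have : ¬ j < l.getD i 0 := fun hh => hiT ((lt_getD_iff l hl.1 i hik j).mp hh)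
    omega
  have hjli : j < l.getD i 0 := (lt_getD_iff l hl.1 i hik j).mpr hiT
  have hdrop : (l.drop (i+1)).countP (fun a => decide (j < a)) = Tcount l j - (i+1) :=
    countP_drop l hl.1 (i+1) j
  exact ⟨i, j, hik, hjli, by unfold hookLen; omega⟩

theorem stmt5 (l : List ℕ) (hl : IsPartitionList l) (s t : ℕ)
    (hs : 0 < s) (ht : 0 < t)
    (hsn : s ∉ hookset l) (htn : t ∉ hookset l) :
    s + t ∉ hookset l := by
  intro hst
  obtain ⟨p, hp, hpst⟩ := hook_to_pair l hl hst
  rw [← add_assoc] at hpst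
  by_cases hps : inB l (p + s)
  · exact hsn (pair_to_hook l hl hs hp hps)
  · exact htn (pair_to_hook l hl ht hps hpst)
end

section
/- A set of positive integers arises as the hookset of some partition if and only if its complement (together with 0) is a numerical monoid. Moreover, hooksets of size g correspond exactly to numerical monoids of genus g. -/
/-- A numerical monoid: contains 0, closed under addition, finite complement. -/
def NumericalMonoid (M : Set ℕ) : Prop :=
  0 ∈ M ∧ (∀ a ∈ M, ∀ b ∈ M, a + b ∈ M) ∧ Mᶜ.Finite

namespace Stmt6Aux

lemma countP_eq_card (l : List ℕ) (p : ℕ → Bool) :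
    l.countP p = ((Finset.range l.length).filter (fun i => p (l.getD i 0) = true)).card := by
  induction l using List.reverseRecOn with
  | nil => simp
  | append_singleton l a ih =>
    rw [List.countP_append, ih]
    have hlen : (l ++ [a]).length = l.length + 1 := by simp
    rw [hlen, Finset.range_add_one, Finset.filter_insert]
    have hag : (l ++ [a]).getD l.length 0 = a := by
      rw [List.getD_eq_getElem _ _ (by simp)]; simp
    have hfe : (Finset.range l.length).filter (fun i => p ((l ++ [a]).getD i 0) = true)
        = (Finset.range l.length).filter (fun i => p (l.getD i 0) = true) := by
      apply Finset.filter_congr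
      intro i hi
      rw [Finset.mem_range] at hi
      rw [List.getD_eq_getElem _ _ (by simp; omega), List.getD_eq_getElem _ _ hi,
        List.getElem_append_left hi]
    rw [hag]
    by_cases hpa : p a = true
    · simp only [hpa, if_pos]
      rw [Finset.card_insert_of_notMem (by simp), hfe]; simp [hpa]
    · simp only [hpa, if_neg]
      rw [hfe]; simp [hpa]

/-- beta-set value of row `a`. -/
def nβ (l : List ℕ) (a : ℕ) : ℕ := l.getD a 0 + (l.length - 1 - a)

/-- The set of north-step positions. -/
def North (l : List ℕ) : Set ℕ := {i | ∃ a, a < l.length ∧ i = nβ l a}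

lemma mono (l : List ℕ) (hs : l.Pairwise (· ≥ ·)) {a b : ℕ} (hab : a ≤ b) (hb : b < l.length) :
    l.getD b 0 ≤ l.getD a 0 := by
  rcases eq_or_lt_of_le hab with rfl | h
  · exact le_refl _
  · have := (List.pairwise_iff_get.mp hs) ⟨a, lt_trans h hb⟩ ⟨b, hb⟩ h
    rw [List.getD_eq_getElem _ _ hb, List.getD_eq_getElem _ _ (h.trans hb)]
    exact this

lemma beta_anti (l : List ℕ) (hs : l.Pairwise (· ≥ ·)) {a b : ℕ} (hab : a < b) (hb : b < l.length) :
    nβ l b < nβ l a := by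
  have h1 := mono l hs hab.le hb
  unfold nβ
  omega

def Cset (l : List ℕ) (i j : ℕ) : Finset ℕ :=
  (Finset.range (l.length - (i+1))).filter (fun k => j < l.getD (i+1+k) 0)

def Dset (l : List ℕ) (i j : ℕ) : Finset ℕ :=
  (Finset.range (l.length - (i+1))).filter (fun k => l.getD (i+1+k) 0 ≤ j)

def fmap (l : List ℕ) (i j : ℕ) : ℕ := j + (Dset l i j).card

lemma hookLen_eq (l : List ℕ) (i j : ℕ) :
    hookLen l i j = (l.getD i 0 - j) + (Cset l i j).card := by
  unfold hookLen Cset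
  rw [countP_eq_card]
  congr 1
  rw [List.length_drop]
  apply congrArg Finset.card
  apply Finset.filter_congr
  intro k hk
  rw [Finset.mem_range] at hk
  rw [List.getD_eq_getElem _ _ (by rw [List.length_drop]; omega), List.getElem_drop,
    List.getD_eq_getElem _ _ (by omega)]
  simp

lemma card_CD (l : List ℕ) (i j : ℕ) :
    (Cset l i j).card + (Dset l i j).card = l.length - (i+1) := by
  have := Finset.card_filter_add_card_filter_not (s := Finset.range (l.length - (i+1)))
    (fun k => j < l.getD (i+1+k) 0)
  rw [Finset.card_range] at this
  rw [← this]
  congr 1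
  apply congrArg Finset.card
  unfold Dset
  apply Finset.filter_congr
  intro k _
  simp only [not_lt, eq_iff_iff]

lemma key1 (l : List ℕ) {i j : ℕ} (hi : i < l.length) (hj : j < l.getD i 0) :
    hookLen l i j + fmap l i j = nβ l i := by
  have h1 := hookLen_eq l i j
  have h2 := card_CD l i j
  unfold fmap nβ
  omega

lemma hook_pos (l : List ℕ) {i j : ℕ} (hj : j < l.getD i 0) : 0 < hookLen l i j := by
  rw [hookLen_eq]; omega

lemma fmap_lt (l : List ℕ) {i j : ℕ} (hi : i < l.length) (hj : j < l.getD i 0) :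
    fmap l i j < nβ l i := by
  have := key1 l hi hj
  have := hook_pos l hj
  omega

lemma fmap_not_north (l : List ℕ) (hs : l.Pairwise (· ≥ ·)) {i j : ℕ} (hi : i < l.length)
    (hj : j < l.getD i 0) : fmap l i j ∉ North l := by
  rintro ⟨a, ha, heq⟩
  set n := l.length with hn
  by_cases hai : a ≤ i
  · have h1 : nβ l i ≤ nβ l a := by
      rcases eq_or_lt_of_le hai with rfl | h
      · exact le_refl _
      · exact (beta_anti l hs h hi).le
    have := fmap_lt l hi hj
    omega
  · push_neg at hai
    by_cases hla : l.getD a 0 ≤ j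
    · have hsub : Finset.Ico (a - i - 1) (n - i - 1) ⊆ Dset l i j := by
        intro k hk
        rw [Finset.mem_Ico] at hk
        unfold Dset
        rw [Finset.mem_filter, Finset.mem_range]
        refine ⟨by omega, ?_⟩
        exact le_trans (mono l hs (by omega) (by omega)) hla
      have hcard := Finset.card_le_card hsub
      rw [Nat.card_Ico] at hcard
      have hβ : nβ l a = l.getD a 0 + (n - 1 - a) := rfl
      unfold fmap at heq
      omega
    · push_neg at hla
      have hsub : Dset l i j ⊆ Finset.Ico (a - i) (n - i - 1) := by
        intro k hk
        unfold Dset at hk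
        rw [Finset.mem_filter, Finset.mem_range] at hk
        rw [Finset.mem_Ico]
        refine ⟨?_, by omega⟩
        by_contra hcon
        push_neg at hcon
        have := mono l hs (show i+1+k ≤ a by omega) ha
        omega
      have hcard := Finset.card_le_card hsub
      rw [Nat.card_Ico] at hcard
      have hβ : nβ l a = l.getD a 0 + (n - 1 - a) := rfl
      unfold fmap at heq
      omega

lemma fmap_strictMono (l : List ℕ) {i j j' : ℕ} (h : j < j') : fmap l i j < fmap l i j' := by
  have hsub : Dset l i j ⊆ Dset l i j' := by
    intro k hk
    unfold Dset at *
    rw [Finset.mem_filter] at *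
    exact ⟨hk.1, by omega⟩
  have := Finset.card_le_card hsub
  unfold fmap
  omega

def NorthF (l : List ℕ) : Finset ℕ := (Finset.range l.length).image (nβ l)

lemma mem_NorthF (l : List ℕ) (x : ℕ) : x ∈ NorthF l ↔ x ∈ North l := by
  unfold NorthF North
  simp [eq_comm]

def Eset (l : List ℕ) (i : ℕ) : Finset ℕ := Finset.range (nβ l i) \ NorthF l

lemma card_Eset (l : List ℕ) (hs : l.Pairwise (· ≥ ·)) {i : ℕ} (hi : i < l.length) :
    (Eset l i).card = l.getD i 0 := by
  set n := l.length with hn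
  have hEq : Eset l i = Finset.range (nβ l i) \ (Finset.Ico (i+1) n).image (nβ l) := by
    unfold Eset NorthF
    ext x
    simp only [Finset.mem_sdiff, Finset.mem_range, Finset.mem_image, Finset.mem_Ico]
    constructor
    · rintro ⟨hx, hnx⟩
      exact ⟨hx, fun ⟨a, ha, he⟩ => hnx ⟨a, by omega, he⟩⟩
    · rintro ⟨hx, hnx⟩
      refine ⟨hx, fun ⟨a, ha, he⟩ => ?_⟩
      rcases lt_or_ge i a with h | h
      · exact hnx ⟨a, ⟨h, ha⟩, he⟩
      · rcases eq_or_lt_of_le h with rfl | h'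
        · omega
        · have := beta_anti l hs h' hi
          omega
  rw [hEq, Finset.card_sdiff_of_subset]
  · have hinj : Set.InjOn (nβ l) (Finset.Ico (i+1) n : Set ℕ) := by
      intro a ha b hb he
      simp only [Finset.coe_Ico, Set.mem_Ico] at ha hb
      by_contra hne
      rcases lt_or_gt_of_ne hne with h | h
      · have := beta_anti l hs h hb.2; omega
      · have := beta_anti l hs h ha.2; omega
    rw [Finset.card_image_of_injOn hinj, Nat.card_Ico, Finset.card_range]
    have : nβ l i = l.getD i 0 + (n - 1 - i) := rfl
    omega
  · intro x hx
    rw [Finset.mem_image] at hx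
    obtain ⟨a, ha, rfl⟩ := hx
    rw [Finset.mem_Ico] at ha
    rw [Finset.mem_range]
    exact beta_anti l hs (by omega) ha.2

lemma image_fmap (l : List ℕ) (hs : l.Pairwise (· ≥ ·)) {i : ℕ} (hi : i < l.length) :
    (Finset.range (l.getD i 0)).image (fmap l i) = Eset l i := by
  apply Finset.eq_of_subset_of_card_le
  · intro x hx
    rw [Finset.mem_image] at hx
    obtain ⟨j, hj, rfl⟩ := hx
    rw [Finset.mem_range] at hj
    unfold Eset
    rw [Finset.mem_sdiff, Finset.mem_range, mem_NorthF]
    exact ⟨fmap_lt l hi hj, fmap_not_north l hs hi hj⟩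
  · rw [card_Eset l hs hi, Finset.card_image_of_injOn, Finset.card_range]
    intro a _ b _ he
    by_contra hne
    rcases lt_or_gt_of_ne hne with h | h
    · have := fmap_strictMono l (i := i) h; omega
    · have := fmap_strictMono l (i := i) h; omega

lemma row_lemma (l : List ℕ) (hs : l.Pairwise (· ≥ ·)) {i : ℕ} (hi : i < l.length) (h : ℕ) :
    (∃ j, j < l.getD i 0 ∧ h = hookLen l i j) ↔
    (∃ s, s ∉ North l ∧ s < nβ l i ∧ h = nβ l i - s) := by
  constructor
  · rintro ⟨j, hj, rfl⟩
    refine ⟨fmap l i j, fmap_not_north l hs hi hj, fmap_lt l hi hj, ?_⟩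
    have := key1 l hi hj
    omega
  · rintro ⟨s, hsn, hslt, rfl⟩
    have hmem : s ∈ Eset l i := by
      unfold Eset
      rw [Finset.mem_sdiff, Finset.mem_range, mem_NorthF]
      exact ⟨hslt, hsn⟩
    rw [← image_fmap l hs hi, Finset.mem_image] at hmem
    obtain ⟨j, hj, hfj⟩ := hmem
    rw [Finset.mem_range] at hj
    refine ⟨j, hj, ?_⟩
    have := key1 l hi hj
    omega

lemma hookset_eq (l : List ℕ) (hs : l.Pairwise (· ≥ ·)) :
    hookset l = {h | ∃ b s, b ∈ North l ∧ s ∉ North l ∧ s < b ∧ h = b - s} := by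
  ext h
  simp only [hookset, Set.mem_setOf_eq]
  constructor
  · rintro ⟨i, j, hi, hj, rfl⟩
    obtain ⟨s, hsn, hslt, he⟩ := (row_lemma l hs hi _).mp ⟨j, hj, rfl⟩
    exact ⟨nβ l i, s, ⟨i, hi, rfl⟩, hsn, hslt, he⟩
  · rintro ⟨b, s, ⟨i, hi, rfl⟩, hsn, hslt, rfl⟩
    obtain ⟨j, hj, he⟩ := (row_lemma l hs hi _).mpr ⟨s, hsn, hslt, rfl⟩
    exact ⟨i, j, hi, hj, he⟩

lemma forward (l : List ℕ) (hl : IsPartitionList l) :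
    NumericalMonoid ((hookset l)ᶜ ∪ {0}) := by
  obtain ⟨hs, hpos⟩ := hl
  have hH := hookset_eq l hs
  refine ⟨Or.inr rfl, ?_, ?_⟩
  · intro a ha b hb
    rcases Nat.eq_zero_or_pos a with rfl | hA
    · simpa using hb
    rcases Nat.eq_zero_or_pos b with rfl | hB
    · simpa using ha
    have ha' : a ∉ hookset l := by
      rcases ha with h | h
      · exact h
      · simp only [Set.mem_singleton_iff] at h; omega
    have hb' : b ∉ hookset l := by
      rcases hb with h | h
      · exact h
      · simp only [Set.mem_singleton_iff] at h; omega
    refine Set.mem_union_left _ ?_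
    intro hab
    rw [hH] at hab
    obtain ⟨β, s, hβN, hsN, hlt, heq⟩ := hab
    have hβeq : β = s + a + b := by omega
    by_cases htn : (s + b) ∈ North l
    · apply hb'
      rw [hH]
      exact ⟨s + b, s, htn, hsN, by omega, by omega⟩
    · apply ha'
      rw [hH]
      exact ⟨β, s + b, hβN, htn, by omega, by omega⟩
  · apply Set.Finite.subset (Set.finite_Iio (nβ l 0 + 1))
    intro x hx
    simp only [Set.mem_compl_iff, Set.mem_union, Set.mem_singleton_iff, not_or, not_not] at hx
    obtain ⟨hx1, _⟩ := hx
    rw [hH] at hx1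
    obtain ⟨β, s, ⟨i, hi, rfl⟩, _, hlt, rfl⟩ := hx1
    have hle : nβ l i ≤ nβ l 0 := by
      rcases Nat.eq_zero_or_pos i with rfl | h
      · exact le_refl _
      · exact (beta_anti l hs h hi).le
    simp only [Set.mem_Iio]; omega

lemma backward (H : Set ℕ) (hpos : ∀ h ∈ H, 0 < h) (hm : NumericalMonoid (Hᶜ ∪ {0})) :
    ∃ l : List ℕ, IsPartitionList l ∧ hookset l = H := by
  classical
  obtain ⟨-, hcl, hfin⟩ := hm
  have h0 : (0:ℕ) ∉ H := fun h => absurd (hpos 0 h) (lt_irrefl 0)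
  have hHsub : H ⊆ (Hᶜ ∪ {0})ᶜ := by
    intro x hx
    simp only [Set.mem_compl_iff, Set.mem_union, Set.mem_singleton_iff, not_or, not_not]
    exact ⟨hx, fun h => h0 (h ▸ hx)⟩
  have hHfin : H.Finite := hfin.subset hHsub
  have hclH : ∀ a ∉ H, ∀ b ∉ H, a + b ∉ H := by
    intro a ha b hb
    have := hcl a (Or.inl ha) b (Or.inl hb)
    rcases this with h | h
    · exact h
    · simp only [Set.mem_singleton_iff] at h
      intro hc; rw [h] at hc; exact h0 hc
  set F := hHfin.toFinset with hF
  set asc := F.sort (· ≤ ·) with hasc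
  set gs := asc.reverse with hgs
  set n := gs.length with hn
  have hlenasc : asc.length = n := by rw [hn, hgs, List.length_reverse]
  have hmemgs : ∀ x, x ∈ gs ↔ x ∈ H := by
    intro x
    rw [hgs, List.mem_reverse, hasc, Finset.mem_sort, hF, Set.Finite.mem_toFinset]
  have hascsort : asc.Pairwise (· < ·) := by rw [hasc]; exact (Finset.sortedLT_sort F).pairwise
  have key : ∀ a b : ℕ, a < b → b < n → gs.getD b 0 < gs.getD a 0 := by
    intro a b hab hb
    rw [List.getD_eq_getElem _ _ hb, List.getD_eq_getElem _ _ (hab.trans hb)]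
    have e1 : gs[b]'hb = asc[asc.length - 1 - b]'(by omega) := List.getElem_reverse _
    have e2 : gs[a]'(hab.trans hb) = asc[asc.length - 1 - a]'(by omega) := List.getElem_reverse _
    rw [e1, e2]
    have := (List.pairwise_iff_get.mp hascsort) ⟨asc.length - 1 - b, by omega⟩
      ⟨asc.length - 1 - a, by omega⟩ (by simp only [Fin.mk_lt_mk]; omega)
    simpa [List.get_eq_getElem] using this
  have gap : ∀ d a : ℕ, a + d < n → gs.getD (a + d) 0 + d ≤ gs.getD a 0 := by
    intro d
    induction d with
    | zero => intro a _; simp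
    | succ d ih =>
      intro a ha
      have h1 := ih (a + 1) (by omega)
      have h2 := key a (a + 1) (by omega) (by omega)
      have he : a + (d + 1) = (a + 1) + d := by omega
      rw [he]
      omega
  have hposg : ∀ a, a < n → 0 < gs.getD a 0 := by
    intro a ha
    apply hpos
    rw [← hmemgs, List.getD_eq_getElem _ _ ha]
    exact List.getElem_mem _
  have hbig : ∀ a, a < n → n - 1 - a < gs.getD a 0 := by
    intro a ha
    have h1 := gap (n - 1 - a) a (by omega)
    have h2 := hposg (a + (n - 1 - a)) (by omega)
    omega
  set l : List ℕ := (List.range n).map (fun a => gs.getD a 0 - (n - 1 - a)) with hl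
  have hlenl : l.length = n := by rw [hl]; simp
  have hgetl : ∀ a, a < n → l.getD a 0 = gs.getD a 0 - (n - 1 - a) := by
    intro a ha
    rw [List.getD_eq_getElem _ _ (by omega)]
    simp [hl]
  have hsort : l.Pairwise (· ≥ ·) := by
    rw [List.pairwise_iff_get]
    intro i j hij
    have hi : (i : ℕ) < n := by rw [← hlenl]; exact i.2
    have hj : (j : ℕ) < n := by rw [← hlenl]; exact j.2
    rw [List.get_eq_getElem, List.get_eq_getElem,
      ← List.getD_eq_getElem l 0 i.2, ← List.getD_eq_getElem l 0 j.2,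
      hgetl i hi, hgetl j hj]
    have h1 := gap ((j : ℕ) - i) i (by omega)
    have h2 : (i : ℕ) + ((j : ℕ) - i) = j := by
      have : (i : ℕ) < j := hij
      omega
    rw [h2] at h1
    have h3 := hbig j hj
    have : (i : ℕ) < j := hij
    omega
  have hposl : ∀ p ∈ l, 0 < p := by
    intro p hp
    rw [List.mem_iff_getElem] at hp
    obtain ⟨a, ha, rfl⟩ := hp
    have ha' : a < n := by omega
    rw [← List.getD_eq_getElem l 0 ha, hgetl a ha']
    have := hbig a ha'
    omega
  have hβ : ∀ a, a < n → nβ l a = gs.getD a 0 := by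
    intro a ha
    unfold nβ
    rw [hlenl, hgetl a ha]
    have := hbig a ha
    omega
  have hNorth : North l = H := by
    ext x
    unfold North
    rw [hlenl]
    simp only [Set.mem_setOf_eq]
    constructor
    · rintro ⟨a, ha, rfl⟩
      rw [hβ a ha, ← hmemgs, List.getD_eq_getElem _ _ ha]
      exact List.getElem_mem _
    · intro hx
      rw [← hmemgs, List.mem_iff_getElem] at hx
      obtain ⟨a, ha, rfl⟩ := hx
      exact ⟨a, ha, by rw [hβ a ha, List.getD_eq_getElem _ _ ha]⟩
  refine ⟨l, ⟨hsort, hposl⟩, ?_⟩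
  rw [hookset_eq l hsort, hNorth]
  ext x
  simp only [Set.mem_setOf_eq]
  constructor
  · rintro ⟨b, s, hbH, hsH, hlt, rfl⟩
    by_contra hc
    have h2 := hclH _ hc _ hsH
    rw [Nat.sub_add_cancel hlt.le] at h2
    exact h2 hbH
  · intro hx
    exact ⟨x, 0, hx, h0, hpos x hx, (Nat.sub_zero x).symm⟩

end Stmt6Aux

theorem stmt6 :
    (∀ H : Set ℕ, (∀ h ∈ H, 0 < h) →
      ((∃ l : List ℕ, IsPartitionList l ∧ hookset l = H) ↔
        NumericalMonoid (Hᶜ ∪ {0}))) ∧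
    (∀ g : ℕ, ∀ H : Set ℕ, (∀ h ∈ H, 0 < h) →
      (((∃ l : List ℕ, IsPartitionList l ∧ hookset l = H) ∧ H.ncard = g) ↔
        (NumericalMonoid (Hᶜ ∪ {0}) ∧ ((Hᶜ ∪ {0})ᶜ).ncard = g))) := by
  have main : ∀ H : Set ℕ, (∀ h ∈ H, 0 < h) →
      ((∃ l : List ℕ, IsPartitionList l ∧ hookset l = H) ↔ NumericalMonoid (Hᶜ ∪ {0})) := by
    intro H hpos
    constructor
    · rintro ⟨l, hl, rfl⟩
      exact Stmt6Aux.forward l hl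
    · exact Stmt6Aux.backward H hpos
  refine ⟨main, ?_⟩
  intro g H hpos
  have hcomp : (Hᶜ ∪ {0})ᶜ = H := by
    ext x
    simp only [Set.mem_compl_iff, Set.mem_union, Set.mem_singleton_iff, not_or, not_not]
    constructor
    · rintro ⟨h1, _⟩; exact h1
    · intro hx
      refine ⟨hx, fun h => ?_⟩
      subst h
      exact absurd (hpos 0 hx) (lt_irrefl 0)
  rw [hcomp]
  exact and_congr_left' (main H hpos)
end

section
/- Let S = {s_1, ..., s_k} be a finite set of positive integers. The set of partitions that are simultaneously s_i-core for every s_i ∈ S is finite if and only if gcd(S) = 1. -/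
namespace Aux7

/-- first-column hook length ("beta number") of row i -/
def beta (l : List ℕ) (i : ℕ) : ℕ := l.getD i 0 + (l.length - 1 - i)

/-- count of rows strictly below i with part ≤ j -/
def cntLe (l : List ℕ) (i j : ℕ) : ℕ := (l.drop (i+1)).countP (fun a => decide (a ≤ j))

def phi (l : List ℕ) (i j : ℕ) : ℕ := j + cntLe l i j

lemma sorted_getD_le {l : List ℕ} (hl : l.Pairwise (· ≥ ·)) {a b : ℕ} (hab : a ≤ b)
    (hb : b < l.length) : l.getD b 0 ≤ l.getD a 0 := by
  have ha : a < l.length := lt_of_le_of_lt hab hb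
  rw [List.getD_eq_getElem l 0 hb, List.getD_eq_getElem l 0 ha]
  rcases eq_or_lt_of_le hab with rfl | h
  · exact le_refl _
  · exact (List.pairwise_iff_getElem.1 hl) a b ha hb h

lemma cntLe_le {l : List ℕ} (i j : ℕ) : cntLe l i j ≤ l.length - i - 1 := by
  have := List.countP_le_length (l := l.drop (i+1)) (p := fun a => decide (a ≤ j))
  simpa [cntLe, List.length_drop, Nat.sub_sub] using this

lemma cntLe_mono {l : List ℕ} (i : ℕ) {j1 j2 : ℕ} (h : j1 ≤ j2) :
    cntLe l i j1 ≤ cntLe l i j2 := by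
  apply List.countP_mono_left
  intro x _ hx
  simp only [decide_eq_true_eq] at *
  omega

lemma cntLe_zero {l : List ℕ} (hl : IsPartitionList l) (i : ℕ) : cntLe l i 0 = 0 := by
  rw [cntLe, List.countP_eq_zero]
  intro a ha
  have := hl.2 a (List.mem_of_mem_drop ha)
  simp only [decide_eq_true_eq]
  omega

lemma cntLe_top {l : List ℕ} (hl : IsPartitionList l) {i : ℕ} (hi : i < l.length) :
    cntLe l i (l.getD i 0) = l.length - i - 1 := by
  rw [cntLe]
  have : ((l.drop (i+1)).countP (fun a => decide (a ≤ l.getD i 0))) = (l.drop (i+1)).length := by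
    rw [List.countP_eq_length]
    intro a ha
    simp only [decide_eq_true_eq]
    obtain ⟨t, ht, rfl⟩ := List.mem_iff_getElem.1 ha
    rw [List.getElem_drop]
    have h2 : i + 1 + t < l.length := by
      have := ht; rw [List.length_drop] at this; omega
    have := sorted_getD_le hl.1 (a := i) (b := i+1+t) (by omega) h2
    rwa [List.getD_eq_getElem l 0 h2] at this
  rw [this, List.length_drop]
  omega

/-- if the part at row a (below i) is > j then few rows counted -/
lemma cntLe_of_gt {l : List ℕ} (hl : IsPartitionList l) {i a j : ℕ} (hia : i < a)
    (ha : a < l.length) (hj : j < l.getD a 0) : cntLe l i j ≤ l.length - 1 - a := by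
  rw [cntLe]
  have hidx : (i+1) + (a - i) = a + 1 := by omega
  have hsplit : l.drop (i+1) = (l.drop (i+1)).take (a - i) ++ l.drop (a+1) := by
    conv_lhs => rw [← List.take_append_drop (a - i) (l.drop (i+1))]
    rw [List.drop_drop, hidx]
  rw [hsplit, List.countP_append]
  have h1 : ((l.drop (i+1)).take (a - i)).countP (fun x => decide (x ≤ j)) = 0 := by
    rw [List.countP_eq_zero]
    intro x hx
    obtain ⟨t, ht, rfl⟩ := List.mem_iff_getElem.1 hx
    have ht' : t < a - i := by
      have := ht; rw [List.length_take] at this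
      omega
    have hlt : i + 1 + t < l.length := by omega
    rw [List.getElem_take, List.getElem_drop]
    have := sorted_getD_le hl.1 (a := i+1+t) (b := a) (by omega) ha
    rw [List.getD_eq_getElem l 0 hlt, List.getD_eq_getElem l 0 ha] at this
    simp only [decide_eq_true_eq]
    rw [List.getD_eq_getElem l 0 ha] at hj
    omega
  have h2 := List.countP_le_length (l := l.drop (a+1)) (p := fun x => decide (x ≤ j))
  rw [List.length_drop] at h2
  omega

/-- if the part at row a (below i) is ≤ j then many rows counted -/
lemma cntLe_of_le {l : List ℕ} (hl : IsPartitionList l) {i a j : ℕ} (hia : i < a)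
    (ha : a < l.length) (hj : l.getD a 0 ≤ j) : l.length - a ≤ cntLe l i j := by
  rw [cntLe]
  have hidx : (i+1) + (a - (i+1)) = a := by omega
  have hsplit : l.drop (i+1) = (l.drop (i+1)).take (a - (i+1)) ++ l.drop a := by
    conv_lhs => rw [← List.take_append_drop (a - (i+1)) (l.drop (i+1))]
    rw [List.drop_drop, hidx]
  rw [hsplit, List.countP_append]
  have h2 : (l.drop a).countP (fun x => decide (x ≤ j)) = (l.drop a).length := by
    rw [List.countP_eq_length]
    intro x hx
    obtain ⟨t, ht, rfl⟩ := List.mem_iff_getElem.1 hx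
    have ht' : a + t < l.length := by
      have := ht; rw [List.length_drop] at this; omega
    rw [List.getElem_drop]
    have := sorted_getD_le hl.1 (a := a) (b := a+t) (by omega) ht'
    rw [List.getD_eq_getElem l 0 ht', List.getD_eq_getElem l 0 ha] at this
    rw [List.getD_eq_getElem l 0 ha] at hj
    simp only [decide_eq_true_eq]
    omega
  rw [h2, List.length_drop]
  omega


lemma phi_mono {l : List ℕ} (hl : IsPartitionList l) (i : ℕ) {j1 j2 : ℕ} (h : j1 ≤ j2) :
    phi l i j1 ≤ phi l i j2 := by
  have := cntLe_mono (l := l) i h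
  unfold phi; omega

lemma phi_top {l : List ℕ} (hl : IsPartitionList l) {i : ℕ} (hi : i < l.length) :
    phi l i (l.getD i 0) = beta l i := by
  rw [phi, cntLe_top hl hi, beta]; omega

/-- Key structural lemma: any value below `beta l i` which is not itself a beta number
is of the form `phi l i j` for a legal column `j` of row `i`. -/
lemma exists_phi_eq {l : List ℕ} (hl : IsPartitionList l) {i : ℕ} (hi : i < l.length)
    {x : ℕ} (hx : x < beta l i) (hB : ∀ a, a < l.length → beta l a ≠ x) :
    ∃ j, j < l.getD i 0 ∧ phi l i j = x := by
  have hex : ∃ j, x < phi l i j := ⟨l.getD i 0, by rw [phi_top hl hi]; exact hx⟩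
  set j0 := Nat.find hex with hj0def
  have hj0 : x < phi l i j0 := Nat.find_spec hex
  have hj0ne : j0 ≠ 0 := by
    intro h0
    rw [h0, phi, cntLe_zero hl] at hj0
    omega
  obtain ⟨j', hj'⟩ : ∃ j', j0 = j' + 1 := ⟨j0 - 1, by omega⟩
  rw [hj'] at hj0
  have hle : ¬ x < phi l i j' := Nat.find_min hex (by omega)
  push_neg at hle
  rcases eq_or_lt_of_le hle with heq | hlt
  · -- phi j' = x
    refine ⟨j', ?_, heq⟩
    by_contra hc
    push_neg at hc
    have := phi_mono hl i hc
    rw [phi_top hl hi] at this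
    omega
  · -- phi j' < x < phi (j'+1): then x is a beta number, contradiction
    exfalso
    set j := j' + 1 with hjdef
    have hcnt : cntLe l i j ≤ l.length - i - 1 := cntLe_le i j
    have hcnt' : cntLe l i j' ≤ l.length - i - 1 := cntLe_le i j'
    rw [phi] at hj0 hlt
    -- define the row a
    set a := j + l.length - 1 - x with hadef
    have hxleb : x ≥ j := by omega
    have ha_lt : a < l.length := by omega
    have ha_gt : i < a := by omega
    -- l.getD a 0 ≤ j
    have h1 : l.getD a 0 ≤ j := by
      by_contra hgt
      push_neg at hgt
      have := cntLe_of_gt hl ha_gt ha_lt hgt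
      omega
    -- l.getD a 0 > j'
    have h2 : j' < l.getD a 0 := by
      by_contra hle2
      push_neg at hle2
      have := cntLe_of_le hl ha_gt ha_lt hle2
      omega
    have : l.getD a 0 = j := by omega
    apply hB a ha_lt
    rw [beta, this]
    omega

/-- complement: countP (j < ·) on the drop equals length minus cntLe -/
lemma countP_gt_eq {l : List ℕ} (i j : ℕ) :
    (l.drop (i+1)).countP (fun a => decide (j < a)) = (l.length - i - 1) - cntLe l i j := by
  have h := List.length_eq_countP_add_countP (fun a => decide (a ≤ j)) (l := l.drop (i+1))
  have h2 : (l.drop (i+1)).countP (fun a => decide ¬(decide (a ≤ j)) = true)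
      = (l.drop (i+1)).countP (fun a => decide (j < a)) := by
    apply List.countP_congr
    intro x _
    simp only [decide_eq_true_eq, Nat.not_le]
  rw [List.length_drop] at h
  rw [cntLe]
  omega

/-- Core closure: if `l` is an `s`-core then the beta set is closed under subtracting `s`. -/
lemma beta_sub_mem {l : List ℕ} (hl : IsPartitionList l) {s : ℕ} (hcore : IsCore l s)
    (hs0 : 0 < s) {i : ℕ} (hi : i < l.length) (hs : s ≤ beta l i) :
    ∃ a, a < l.length ∧ beta l a + s = beta l i := by
  by_contra h
  push_neg at h
  set x := beta l i - s with hxdef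
  have hxs : x + s = beta l i := by omega
  have hB : ∀ a, a < l.length → beta l a ≠ x := by
    intro a ha heq
    exact (h a ha) (by omega)
  have hx : x < beta l i := by omega
  obtain ⟨j, hj, hphi⟩ := exists_phi_eq hl hi hx hB
  have hhook : hookLen l i j = s := by
    rw [hookLen, countP_gt_eq]
    rw [phi] at hphi
    have hcnt : cntLe l i j ≤ l.length - i - 1 := cntLe_le i j
    rw [beta] at hxs
    omega
  exact hcore (hookLen l i j) ⟨i, j, hi, hj, rfl⟩ (hhook ▸ dvd_refl s)

lemma bezout (S : Finset ℕ) : ∃ a ∈ AddSubmonoid.closure (S : Set ℕ),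
    ∃ b ∈ AddSubmonoid.closure (S : Set ℕ), (a : ℤ) = b + (S.gcd id : ℕ) := by
  classical
  induction S using Finset.induction with
  | empty => exact ⟨0, zero_mem _, 0, zero_mem _, by simp⟩
  | @insert s S hs ih =>
    obtain ⟨a, ha, b, hb, hab⟩ := ih
    have hmono : AddSubmonoid.closure (S : Set ℕ) ≤ AddSubmonoid.closure ((insert s S : Finset ℕ) : Set ℕ) := by
      apply AddSubmonoid.closure_mono
      intro x hx
      simp only [Finset.coe_insert, Set.mem_insert_iff]
      exact Or.inr hx
    have ha' := hmono ha
    have hb' := hmono hb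
    have hsmem : s ∈ AddSubmonoid.closure ((insert s S : Finset ℕ) : Set ℕ) :=
      AddSubmonoid.subset_closure (by simp)
    set g := S.gcd id with hg
    have hgcd : ((((insert s S).gcd id : ℕ)) : ℤ) = s * Nat.gcdA s g + g * Nat.gcdB s g := by
      rw [Finset.gcd_insert]
      have : GCDMonoid.gcd (id s) (S.gcd id) = Nat.gcd s g := rfl
      rw [this]
      exact Nat.gcd_eq_gcd_ab s g
    set x := Nat.gcdA s g
    set y := Nat.gcdB s g
    refine ⟨x.toNat * s + y.toNat * a + (-y).toNat * b, ?_,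
            (-x).toNat * s + (-y).toNat * a + y.toNat * b, ?_, ?_⟩
    · refine add_mem (add_mem ?_ ?_) ?_ <;>
      · first
        | simpa using AddSubmonoid.nsmul_mem _ hsmem _
        | simpa using AddSubmonoid.nsmul_mem _ ha' _
        | simpa using AddSubmonoid.nsmul_mem _ hb' _
    · refine add_mem (add_mem ?_ ?_) ?_ <;>
      · first
        | simpa using AddSubmonoid.nsmul_mem _ hsmem _
        | simpa using AddSubmonoid.nsmul_mem _ ha' _
        | simpa using AddSubmonoid.nsmul_mem _ hb' _
    · have hX := Int.toNat_sub_toNat_neg x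
      have hY := Int.toNat_sub_toNat_neg y
      push_cast
      linear_combination (s : ℤ) * hX + (a : ℤ) * hY - (b : ℤ) * hY + y * hab - hgcd

lemma consecutive (S : Finset ℕ) (h1 : S.gcd id = 1) :
    ∃ u, u ∈ AddSubmonoid.closure (S : Set ℕ) ∧ u + 1 ∈ AddSubmonoid.closure (S : Set ℕ) := by
  obtain ⟨a, ha, b, hb, hab⟩ := bezout S
  rw [h1] at hab
  have : a = b + 1 := by exact_mod_cast hab
  exact ⟨b, hb, this ▸ ha⟩

lemma cofinite (S : Finset ℕ) (h1 : S.gcd id = 1) :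
    ∃ N, ∀ n, N ≤ n → n ∈ AddSubmonoid.closure (S : Set ℕ) := by
  obtain ⟨u, hu, hu1⟩ := consecutive S h1
  rcases Nat.eq_zero_or_pos u with rfl | hupos
  · refine ⟨0, fun n _ => ?_⟩
    have : n • (0 + 1) ∈ AddSubmonoid.closure (S : Set ℕ) := AddSubmonoid.nsmul_mem _ hu1 n
    simpa using this
  · refine ⟨u * u, fun n hn => ?_⟩
    set q := n / u with hq
    set r := n % u with hr
    have hdm : u * q + r = n := Nat.div_add_mod n u
    have hrlt : r < u := Nat.mod_lt _ hupos
    have hqr : r ≤ q := by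
      have : u ≤ q := Nat.le_div_iff_mul_le hupos |>.2 (by nlinarith)
      omega
    have hmem : (q - r) • u + r • (u + 1) ∈ AddSubmonoid.closure (S : Set ℕ) :=
      add_mem (AddSubmonoid.nsmul_mem _ hu _) (AddSubmonoid.nsmul_mem _ hu1 _)
    have heq : (q - r) • u + r • (u + 1) = n := by
      simp only [smul_eq_mul]
      have h1 : (q - r) * u = q * u - r * u := by rw [Nat.sub_mul]
      have h2 : r * u ≤ q * u := Nat.mul_le_mul_right _ hqr
      have h3 : r * (u + 1) = r * u + r := by ring
      have h4 : q * u = u * q := Nat.mul_comm _ _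
      omega
    rwa [heq] at hmem


lemma B_closed {l : List ℕ} (hl : IsPartitionList l) {S : Finset ℕ}
    (hpos : ∀ s ∈ S, 0 < s) (hcores : ∀ s ∈ S, IsCore l s) :
    ∀ n ∈ AddSubmonoid.closure (S : Set ℕ), ∀ i, i < l.length → n ≤ beta l i →
      ∃ a, a < l.length ∧ beta l a + n = beta l i := by
  intro n hn
  induction hn using AddSubmonoid.closure_induction with
  | mem s hs =>
    intro i hi hle
    exact beta_sub_mem hl (hcores s hs) (hpos s hs) hi hle
  | zero =>
    intro i hi _
    exact ⟨i, hi, by omega⟩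
  | add n1 n2 hn1 hn2 ih1 ih2 =>
    intro i hi hle
    obtain ⟨a1, ha1, hb1⟩ := ih1 i hi (by omega)
    obtain ⟨a2, ha2, hb2⟩ := ih2 a1 ha1 (by omega)
    exact ⟨a2, ha2, by omega⟩

lemma finite_bounded (N : ℕ) : {l : List ℕ | l.length ≤ N ∧ ∀ x ∈ l, x ≤ N}.Finite := by
  suffices h : ∀ n, {l : List ℕ | l.length ≤ n ∧ ∀ x ∈ l, x ≤ N}.Finite from h N
  intro n
  induction n with
  | zero =>
    apply Set.Finite.subset (Set.finite_singleton ([] : List ℕ))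
    rintro l ⟨hlen, -⟩
    have : l = [] := List.length_eq_zero_iff.1 (by omega)
    simp [this]
  | succ n ih =>
    apply Set.Finite.subset (Set.Finite.insert ([] : List ℕ)
      (Set.Finite.image2 (· :: ·) (Set.finite_Iic N) ih))
    rintro l ⟨hlen, hmem⟩
    cases l with
    | nil => exact Set.mem_insert _ _
    | cons x t =>
      apply Set.mem_insert_of_mem
      refine Set.mem_image2_of_mem ?_ ?_
      · exact hmem x (by simp)
      · exact ⟨by simpa using hlen, fun y hy => hmem y (by simp [hy])⟩

lemma finite_dir (S : Finset ℕ) (hpos : ∀ s ∈ S, 0 < s) (h1 : S.gcd id = 1) :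
    {l : List ℕ | IsPartitionList l ∧ ∀ s ∈ S, IsCore l s}.Finite := by
  obtain ⟨N, hN⟩ := cofinite S h1
  apply Set.Finite.subset (finite_bounded N)
  rintro l ⟨hl, hcores⟩
  rcases eq_or_ne l [] with rfl | hne
  · simp
  have hlen : 0 < l.length := List.length_pos_iff.2 hne
  have hbpos : ∀ a, a < l.length → 0 < beta l a := by
    intro a ha
    have : 0 < l.getD a 0 := by
      apply hl.2
      rw [List.getD_eq_getElem l 0 ha]
      exact List.getElem_mem _
    rw [beta]; omega
  have hb0 : beta l 0 < N := by
    by_contra hge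
    push_neg at hge
    obtain ⟨a, ha, hba⟩ := B_closed hl hpos hcores (beta l 0) (hN _ hge) 0 hlen (le_refl _)
    have := hbpos a ha
    omega
  have hl0 : 0 < l.getD 0 0 := by
    apply hl.2
    rw [List.getD_eq_getElem l 0 hlen]
    exact List.getElem_mem _
  have hbeta0 : beta l 0 = l.getD 0 0 + (l.length - 1) := by simp [beta]
  constructor
  · omega
  · intro x hx
    obtain ⟨t, ht, rfl⟩ := List.mem_iff_getElem.1 hx
    have := sorted_getD_le hl.1 (a := 0) (b := t) (by omega) ht
    rw [List.getD_eq_getElem l 0 ht] at this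
    omega

/-- scaled staircase -/
def stair (c k : ℕ) : List ℕ := (List.range k).map (fun i => c * (k - i))

lemma stair_length (c k : ℕ) : (stair c k).length = k := by simp [stair]

lemma stair_getD {c k i : ℕ} (hik : i < k) : (stair c k).getD i 0 = c * (k - i) := by
  rw [List.getD_eq_getElem _ _ (by simpa [stair_length] using hik)]
  simp [stair]

lemma countP_eq_sum (l : List ℕ) (p : ℕ → Bool) :
    l.countP p = ∑ t ∈ Finset.range l.length, if p (l.getD t 0) then 1 else 0 := by
  induction l with
  | nil => simp
  | cons a l ih =>
    rw [List.countP_cons, List.length_cons, Finset.sum_range_succ']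
    simp only [List.getD_cons_succ, List.getD_cons_zero]
    rw [ih]

lemma countP_drop_eq_sum (L : List ℕ) (m : ℕ) (p : ℕ → Bool) :
    (L.drop m).countP p = ∑ t ∈ Finset.range (L.length - m),
      if p (L.getD (m + t) 0) then 1 else 0 := by
  rw [countP_eq_sum, List.length_drop]
  apply Finset.sum_congr rfl
  intro t ht
  have ht' : t < L.length - m := Finset.mem_range.1 ht
  congr 1
  rw [List.getD_eq_getElem _ _ (by rw [List.length_drop]; omega),
      List.getD_eq_getElem _ _ (by omega), List.getElem_drop]

lemma sum_indicator_lt (n m : ℕ) :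
    (∑ t ∈ Finset.range n, if t < m then (1:ℕ) else 0) = min m n := by
  induction n with
  | zero => simp
  | succ n ih =>
    rw [Finset.sum_range_succ, ih]
    split_ifs with h <;> omega

lemma stair_hook {c k : ℕ} (hc : 0 < c) {i j : ℕ} (hi : i < k) (hj : j < c * (k - i)) :
    ¬ (c + 1) ∣ hookLen (stair c k) i j := by
  intro hdvd
  set q := j / c with hq
  set r := j % c with hr
  have hdm : c * q + r = j := Nat.div_add_mod j c
  have hrc : r < c := Nat.mod_lt _ hc
  have key : ∀ M, j < c * M ↔ q < M := by
    intro M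
    rw [hq, Nat.div_lt_iff_lt_mul hc, Nat.mul_comm]
  have hqm : q < k - i := (key _).1 hj
  clear_value q r
  -- compute the count
  have hcount : (List.drop (i + 1) (stair c k)).countP (fun a => decide (j < a))
      = k - i - 1 - q := by
    rw [countP_drop_eq_sum, stair_length]
    have hcongr : ∀ t ∈ Finset.range (k - (i+1)),
        (if (decide (j < (stair c k).getD (i + 1 + t) 0)) then (1:ℕ) else 0)
          = if t < k - i - 1 - q then 1 else 0 := by
      intro t ht
      have ht' : t < k - (i+1) := Finset.mem_range.1 ht
      rw [stair_getD (by omega)]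
      have hiff : j < c * (k - (i + 1 + t)) ↔ t < k - i - 1 - q := by
        constructor
        · intro h
          have := (key _).1 h
          omega
        · intro h
          apply (key _).2
          omega
      simp only [decide_eq_true_eq]
      split_ifs with h1 h2 h2
      · rfl
      · exact absurd (hiff.1 h1) h2
      · exact absurd (hiff.2 h2) h1
      · rfl
    rw [Finset.sum_congr rfl hcongr, sum_indicator_lt]
    omega
  rw [hookLen, hcount, stair_getD hi] at hdvd
  set m := k - i with hm
  have hm1 : 1 ≤ m := by omega
  set A := c * (m - q) with hA
  have hAeq : c * m = c * q + A := by
    rw [hA, ← Nat.left_distrib]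
    congr 1
    omega
  have hexp : (c+1) * (m - q) = A + (m - q) := by
    rw [add_mul, one_mul, hA]
  clear_value A
  have hd2 : (c + 1) ∣ (c+1) * (m - q) := Dvd.intro _ rfl
  have hd3 : (c + 1) ∣ (r + 1) := by
    have hsub := Nat.dvd_sub hd2 hdvd
    have heq : (c+1) * (m - q) - (c * m - j + (m - 1 - q)) = r + 1 := by
      omega
    rwa [heq] at hsub
  have := Nat.le_of_dvd (by omega) hd3
  omega

lemma stair_partition {c k : ℕ} (hc : 0 < c) : IsPartitionList (stair c k) := by
  constructor
  · have h1 : List.Pairwise (fun a b : ℕ => c * (k - a) ≥ c * (k - b)) (List.range k) :=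
      (List.pairwise_lt_range (n := k)).imp (fun hab => Nat.mul_le_mul_left c (by omega))
    exact List.pairwise_map.2 h1
  · intro p hp
    rw [stair] at hp
    obtain ⟨i, hi, rfl⟩ := List.mem_map.1 hp
    have : i < k := List.mem_range.1 hi
    exact Nat.mul_pos hc (by omega)

lemma infinite_dir (S : Finset ℕ) (hS : S.Nonempty) (hpos : ∀ s ∈ S, 0 < s)
    (hg : S.gcd id ≠ 1) :
    {l : List ℕ | IsPartitionList l ∧ ∀ s ∈ S, IsCore l s}.Infinite := by
  set g := S.gcd id with hgdef
  have hg0 : g ≠ 0 := by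
    intro h0
    obtain ⟨s, hs⟩ := hS
    have h2 := Finset.gcd_eq_zero_iff.1 (hgdef ▸ h0) s hs
    have := hpos s hs
    simp only [id] at h2
    omega
  have hg2 : 2 ≤ g := by omega
  set c := g - 1 with hc
  have hc0 : 0 < c := by omega
  have hcg : c + 1 = g := by omega
  apply Set.infinite_of_injective_forall_mem (f := fun k => stair c k)
  · intro k1 k2 h
    have := congrArg List.length h
    simpa [stair_length] using this
  · intro k
    refine ⟨stair_partition hc0, ?_⟩
    intro s hs h hh hdvd
    obtain ⟨i, j, hi, hj, rfl⟩ := hh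
    rw [stair_length] at hi
    rw [stair_getD hi] at hj
    apply stair_hook hc0 hi hj
    have hdg : g ∣ s := by exact Finset.gcd_dvd hs
    rw [hcg]
    exact dvd_trans hdg hdvd

end Aux7

theorem stmt7 (S : Finset ℕ) (hS : S.Nonempty) (hpos : ∀ s ∈ S, 0 < s) :
    {l : List ℕ | IsPartitionList l ∧ ∀ s ∈ S, IsCore l s}.Finite ↔
      S.gcd id = 1 := by
  constructor
  · intro hfin
    by_contra hne
    exact (Aux7.infinite_dir S hS hpos hne) hfin
  · intro h1
    exact Aux7.finite_dir S hpos h1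
end

section
/- For coprime positive integers s and t, the number of partitions that are simultaneously s-core and t-core is finite. -/
namespace Stmt10Aux

/-- beta numbers (first-column hook lengths). -/
def bet (l : List ℕ) (a : ℕ) : ℕ := l.getD a 0 + (l.length - 1 - a)

lemma getD_anti {l : List ℕ} (hl : l.Pairwise (· ≥ ·)) {p q : ℕ} (hpq : p ≤ q)
    (hq : q < l.length) : l.getD q 0 ≤ l.getD p 0 := by
  have hp : p < l.length := lt_of_le_of_lt hpq hq
  rw [List.getD_eq_getElem l 0 hq, List.getD_eq_getElem l 0 hp]
  have := hl.rel_get_of_le (a := ⟨p, hp⟩) (b := ⟨q, hq⟩) hpq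
  simpa [List.get_eq_getElem] using this

lemma bet_anti {l : List ℕ} (hl : l.Pairwise (· ≥ ·)) {a a' : ℕ} (h : a < a')
    (ha' : a' < l.length) : bet l a' < bet l a := by
  have h1 := getD_anti hl h.le ha'
  unfold bet
  omega

/-- count of elements ≤ j below row i. -/
def cnt (l : List ℕ) (i j : ℕ) : ℕ := (l.drop (i + 1)).countP (fun a => decide (a ≤ j))

lemma cnt_le (l : List ℕ) (i j : ℕ) (hi : i < l.length) : cnt l i j ≤ l.length - 1 - i := by
  have h := List.countP_le_length (l := l.drop (i+1)) (p := fun a => decide (a ≤ j))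
  rw [List.length_drop] at h
  unfold cnt; omega

lemma cnt_mono (l : List ℕ) (i : ℕ) {j j' : ℕ} (h : j ≤ j') : cnt l i j ≤ cnt l i j' := by
  apply List.countP_mono_left
  intro x _ hx
  simp only [decide_eq_true_eq] at hx ⊢
  omega

lemma hookLen_eq (l : List ℕ) {i j : ℕ} (hi : i < l.length) (hj : j < l.getD i 0) :
    hookLen l i j = bet l i - (j + cnt l i j) := by
  have hsum := List.length_eq_countP_add_countP (fun a => decide (j < a)) (l := l.drop (i+1))
  rw [List.length_drop] at hsum
  have hcongr : (l.drop (i+1)).countP (fun a => decide (¬ (decide (j < a)) = true))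
      = cnt l i j := by
    apply List.countP_congr
    intro x _
    simp [Nat.not_lt]
  rw [hcongr] at hsum
  have hcnt := cnt_le l i j hi
  unfold hookLen bet
  omega

lemma g_mem_pathSet {l : List ℕ} (hl : IsPartitionList l) {i j : ℕ}
    (hi : i < l.length) (hj : j < l.getD i 0) : j + cnt l i j ∈ pathSet l := by
  rintro ⟨a, haL, heq⟩
  have hc_le := cnt_le l i j hi
  rcases le_or_gt a i with hai | hia
  · -- a ≤ i : bet a too large
    have h1 : l.getD i 0 ≤ l.getD a 0 := getD_anti hl.1 hai hi
    omega
  · rcases le_or_gt (l.getD a 0) j with hla | hla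
    · -- row a small: cnt ≥ length - a
      have hsub : l.drop a = (l.drop (i+1)).drop (a - (i+1)) := by
        rw [List.drop_drop]; congr 1; omega
      have h1 : (l.drop a).countP (fun x => decide (x ≤ j)) ≤ cnt l i j := by
        rw [hsub]; exact (List.drop_sublist _ _).countP_le
      have h2 : (l.drop a).countP (fun x => decide (x ≤ j)) = (l.drop a).length := by
        rw [List.countP_eq_length]
        intro x hx
        obtain ⟨k, hk, hxk⟩ := List.getElem_of_mem hx
        rw [List.getElem_drop] at hxk
        have hak : a + k < l.length := by rw [List.length_drop] at hk; omega
        have := getD_anti hl.1 (Nat.le_add_right a k) hak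
        rw [List.getD_eq_getElem l 0 hak, hxk] at this
        simp only [decide_eq_true_eq]
        omega
      rw [List.length_drop] at h2
      omega
    · -- row a big: cnt ≤ length - 1 - a
      have hsplit : (l.drop (i+1)).take (a - i) ++ l.drop (a+1) = l.drop (i+1) := by
        have : l.drop (a+1) = (l.drop (i+1)).drop (a - i) := by
          rw [List.drop_drop]; congr 1; omega
        rw [this, List.take_append_drop]
      have hc : cnt l i j = ((l.drop (i+1)).take (a - i)).countP (fun x => decide (x ≤ j))
          + (l.drop (a+1)).countP (fun x => decide (x ≤ j)) := by
        unfold cnt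
        conv_lhs => rw [← hsplit]
        rw [List.countP_append]
      have h0 : ((l.drop (i+1)).take (a - i)).countP (fun x => decide (x ≤ j)) = 0 := by
        rw [List.countP_eq_zero]
        intro x hx
        obtain ⟨k, hk, hxk⟩ := List.getElem_of_mem hx
        rw [List.getElem_take, List.getElem_drop] at hxk
        have hklt : k < a - i := by
          have := hk
          simp only [List.length_take, List.length_drop] at this
          omega
        have hidx : i + 1 + k ≤ a := by omega
        have hge := getD_anti hl.1 hidx haL
        rw [List.getD_eq_getElem l 0 (by omega : i + 1 + k < l.length), hxk] at hge
        simp only [decide_eq_true_eq]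
        omega
      have h1 : (l.drop (a+1)).countP (fun x => decide (x ≤ j)) ≤ l.length - (a+1) := by
        have := List.countP_le_length (l := l.drop (a+1)) (p := fun x => decide (x ≤ j))
        rw [List.length_drop] at this
        exact this
      omega

/-- the finset of beta numbers -/
noncomputable def betaFinset (l : List ℕ) : Finset ℕ :=
  (Finset.range l.length).image (bet l)

lemma mem_betaFinset {l : List ℕ} {n : ℕ} :
    n ∈ betaFinset l ↔ ∃ a, a < l.length ∧ n = bet l a := by
  simp [betaFinset, eq_comm]

lemma mem_pathSet_iff {l : List ℕ} {n : ℕ} : n ∈ pathSet l ↔ n ∉ betaFinset l := by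
  rw [mem_betaFinset]
  simp [pathSet, bet]

lemma card_T {l : List ℕ} (hl : IsPartitionList l) {i : ℕ} (hi : i < l.length) :
    (Finset.range (bet l i) \ betaFinset l).card = l.getD i 0 := by
  have hinter : Finset.range (bet l i) ∩ betaFinset l
      = (Finset.Ico (i+1) l.length).image (bet l) := by
    ext x
    simp only [Finset.mem_inter, Finset.mem_range, mem_betaFinset, Finset.mem_image,
      Finset.mem_Ico]
    constructor
    · rintro ⟨hx, a, haL, rfl⟩
      refine ⟨a, ⟨?_, haL⟩, rfl⟩
      by_contra hc
      push_neg at hc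
      rcases eq_or_lt_of_le (Nat.le_of_lt_succ hc) with rfl | hlt
      · omega
      · exact absurd (bet_anti hl.1 hlt hi) (by omega)
    · rintro ⟨a, ⟨hai, haL⟩, rfl⟩
      exact ⟨bet_anti hl.1 (by omega) haL, a, haL, rfl⟩
  have hcard_img : ((Finset.Ico (i+1) l.length).image (bet l)).card = l.length - 1 - i := by
    rw [Finset.card_image_of_injOn, Nat.card_Ico]
    · omega
    · intro a ha b hb hab
      simp only [Finset.coe_Ico, Set.mem_Ico] at ha hb
      by_contra hne
      rcases lt_or_gt_of_ne hne with h | h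
      · exact absurd hab (Nat.ne_of_gt (bet_anti hl.1 h hb.2))
      · exact absurd hab.symm (Nat.ne_of_gt (bet_anti hl.1 h ha.2))
  rw [← Finset.sdiff_inter_self_left, Finset.card_sdiff_of_subset Finset.inter_subset_left,
    hinter, hcard_img, Finset.card_range]
  unfold bet
  omega

lemma exists_hook {l : List ℕ} (hl : IsPartitionList l) {i n : ℕ} (hi : i < l.length)
    (hn : n ∈ pathSet l) (hnb : n < bet l i) :
    ∃ j, j < l.getD i 0 ∧ hookLen l i j = bet l i - n := by
  classical
  set G : Finset ℕ := (Finset.range (l.getD i 0)).image (fun j => j + cnt l i j) with hG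
  have hsm : StrictMono (fun j => j + cnt l i j) := by
    intro x y hxy
    have := cnt_mono l i hxy.le
    simp only
    omega
  have hGsub : G ⊆ Finset.range (bet l i) \ betaFinset l := by
    intro x hx
    rw [hG, Finset.mem_image] at hx
    obtain ⟨j, hj, rfl⟩ := hx
    rw [Finset.mem_range] at hj
    rw [Finset.mem_sdiff, Finset.mem_range]
    constructor
    · have := cnt_le l i j hi
      unfold bet
      omega
    · rw [← mem_pathSet_iff]
      exact g_mem_pathSet hl hi hj
  have hGcard : G.card = l.getD i 0 := by
    rw [hG, Finset.card_image_of_injective _ hsm.injective, Finset.card_range]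
  have hGeq : G = Finset.range (bet l i) \ betaFinset l :=
    Finset.eq_of_subset_of_card_le hGsub (by rw [hGcard, card_T hl hi])
  have hnG : n ∈ G := by
    rw [hGeq, Finset.mem_sdiff, Finset.mem_range, ← mem_pathSet_iff]
    exact ⟨hnb, hn⟩
  rw [hG, Finset.mem_image] at hnG
  obtain ⟨j, hj, hjn⟩ := hnG
  rw [Finset.mem_range] at hj
  exact ⟨j, hj, by rw [hookLen_eq l hi hj, hjn]⟩

lemma pathSet_add {l : List ℕ} (hl : IsPartitionList l) {s : ℕ} (hcore : IsCore l s)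
    (hs : 0 < s) {n : ℕ} (hn : n ∈ pathSet l) : n + s ∈ pathSet l := by
  by_contra hc
  simp only [pathSet, Set.mem_setOf_eq, not_not] at hc
  obtain ⟨a, haL, heq⟩ := hc
  have heq' : n + s = bet l a := heq
  obtain ⟨j, hj, hhook⟩ := exists_hook hl haL hn (by omega)
  refine hcore s ⟨a, j, haL, hj, ?_⟩ (dvd_refl s)
  omega

lemma zero_mem_pathSet {l : List ℕ} (hl : IsPartitionList l) : (0 : ℕ) ∈ pathSet l := by
  rintro ⟨a, haL, h0⟩
  have : 0 < l.getD a 0 := by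
    rw [List.getD_eq_getElem l 0 haL]
    exact hl.2 _ (List.getElem_mem _)
  omega

lemma combo_mem_pathSet {l : List ℕ} (hl : IsPartitionList l) {s t : ℕ}
    (hcs : IsCore l s) (hct : IsCore l t) (hs : 0 < s) (ht : 0 < t) (a b : ℕ) :
    a * s + b * t ∈ pathSet l := by
  induction a with
  | zero =>
    simp only [Nat.zero_mul, Nat.zero_add]
    induction b with
    | zero => simpa using zero_mem_pathSet hl
    | succ b ih =>
      have := pathSet_add hl hct ht ih
      have he : b * t + t = (b+1) * t := by ring
      rwa [he] at this
  | succ a ih =>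
    have := pathSet_add hl hcs hs ih
    have he : a * s + b * t + s = (a+1) * s + b * t := by ring
    rwa [he] at this

lemma exists_combo {s t : ℕ} (hs : 0 < s) (ht : 0 < t) (hco : Nat.Coprime s t)
    {n : ℕ} (hn : s * t ≤ n) : ∃ a b, n = a * s + b * t := by
  rcases eq_or_lt_of_le (show 1 ≤ t from ht) with rfl | ht1
  · exact ⟨0, n, by omega⟩
  haveI : NeZero t := ⟨by omega⟩
  have hunit : IsUnit ((s : ZMod t)) := by
    rw [ZMod.isUnit_iff_coprime]
    exact hco
  set x : ZMod t := (n : ZMod t) * (s : ZMod t)⁻¹ with hx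
  have hmod : x.val * s ≡ n [MOD t] := by
    have hcast : ((x.val * s : ℕ) : ZMod t) = ((n : ℕ) : ZMod t) := by
      push_cast
      rw [ZMod.natCast_val, ZMod.cast_id, hx, mul_assoc, ZMod.inv_mul_of_unit _ hunit,
        mul_one]
    exact (ZMod.natCast_eq_natCast_iff _ _ _).mp hcast
  have hlt : x.val * s < s * t := by
    have hv := ZMod.val_lt x
    have h1 : x.val * s ≤ (t-1) * s := Nat.mul_le_mul_right s (by omega)
    have h2 : t * s = (t-1) * s + s := by
      rw [Nat.sub_one_mul]
      have : s ≤ t * s := Nat.le_mul_of_pos_left s ht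
      omega
    have h3 : s * t = t * s := Nat.mul_comm s t
    omega
  have hle : x.val * s ≤ n := by omega
  have hdvd : t ∣ n - x.val * s := (Nat.modEq_iff_dvd' hle).mp hmod
  obtain ⟨b, hb⟩ := hdvd
  exact ⟨x.val, b, by rw [Nat.mul_comm b t]; omega⟩

end Stmt10Aux

open Stmt10Aux in
theorem stmt10 (s t : ℕ) (hs : 0 < s) (ht : 0 < t) (hco : Nat.Coprime s t) :
    {l : List ℕ | IsPartitionList l ∧ IsCore l s ∧ IsCore l t}.Finite := by
  classical
  set N := s * t with hN
  have hN0 : 0 < N := Nat.mul_pos hs ht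
  -- every l in the set has length ≤ N and entries < N
  have hbound : ∀ l ∈ {l : List ℕ | IsPartitionList l ∧ IsCore l s ∧ IsCore l t},
      l.length ≤ N ∧ ∀ x ∈ l, x < N := by
    rintro l ⟨hl, hcs, hct⟩
    have hbet : ∀ a, a < l.length → bet l a < N := by
      intro a ha
      by_contra hc
      push_neg at hc
      obtain ⟨u, v, huv⟩ := exists_combo hs ht hco hc
      have hmem := combo_mem_pathSet hl hcs hct hs ht u v
      rw [← huv] at hmem
      exact hmem ⟨a, ha, rfl⟩
    constructor
    · rcases Nat.eq_zero_or_pos l.length with h0 | h0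
      · omega
      · have h1 := hbet 0 h0
        have h2 : 0 < l.getD 0 0 := by
          rw [List.getD_eq_getElem l 0 h0]
          exact hl.2 _ (List.getElem_mem _)
        unfold bet at h1
        omega
    · intro x hx
      obtain ⟨k, hk, hxk⟩ := List.getElem_of_mem hx
      have h1 := hbet k hk
      have h2 : l.getD k 0 = x := by rw [List.getD_eq_getElem l 0 hk, hxk]
      unfold bet at h1
      omega
  -- the set of such lists is finite
  have hfin : {l : List ℕ | l.length ≤ N ∧ ∀ x ∈ l, x < N}.Finite := by
    have hfin1 : {m : List (Fin N) | m.length ≤ N}.Finite := List.finite_length_le _ N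
    have himg : {l : List ℕ | l.length ≤ N ∧ ∀ x ∈ l, x < N}
        ⊆ (List.map (Fin.val : Fin N → ℕ)) '' {m : List (Fin N) | m.length ≤ N} := by
      rintro l ⟨hlen, hlt⟩
      refine ⟨l.pmap (fun x h => (⟨x, h⟩ : Fin N)) hlt, ?_, ?_⟩
      · simp only [Set.mem_setOf_eq, List.length_pmap]
        exact hlen
      · rw [List.map_pmap]
        simp
    exact (hfin1.image _).subset himg
  exact hfin.subset (fun l hl => hbound l hl)
end

section
/- The partition λ_k = (2k-1, 2k-3, ..., 3, 1) (odd parts descending) is a 3-core whose hookset is exactly the set of all positive integers not divisible by 3 and at most 3k - 2; it partitions k². -/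
/-- The partition `(2k-1, 2k-3, ..., 3, 1)`. -/
def oddStair (k : ℕ) : List ℕ := (List.range k).reverse.map (fun a => 2 * a + 1)

lemma oddStair_succ (k : ℕ) : oddStair (k+1) = (2*k+1) :: oddStair k := by
  simp [oddStair, List.range_succ]

@[simp] lemma oddStair_length (k : ℕ) : (oddStair k).length = k := by
  simp [oddStair]

lemma oddStair_mem {x k : ℕ} (h : x ∈ oddStair k) : ∃ a, a < k ∧ x = 2*a+1 := by
  simp only [oddStair, List.mem_map, List.mem_reverse, List.mem_range] at h
  obtain ⟨a, ha, rfl⟩ := h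
  exact ⟨a, ha, rfl⟩

lemma oddStair_getD {i k : ℕ} (h : i < k) : (oddStair k).getD i 0 = 2*(k-1-i)+1 := by
  induction k generalizing i with
  | zero => omega
  | succ k ih =>
    rw [oddStair_succ]
    cases i with
    | zero => simp
    | succ i =>
      have h' : i < k := by omega
      rw [List.getD_cons_succ, ih h']
      congr 2
      omega

lemma oddStair_drop (i k : ℕ) : (oddStair k).drop i = oddStair (k - i) := by
  induction k generalizing i with
  | zero => simp [oddStair]
  | succ k ih =>
    cases i with
    | zero => simp
    | succ i => rw [oddStair_succ]; simpa [Nat.succ_sub_succ] using ih i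

lemma oddStair_countP (n j : ℕ) :
    (oddStair n).countP (fun a => decide (j < a)) = n - (j+1)/2 := by
  induction n with
  | zero => simp [oddStair]
  | succ n ih =>
    rw [oddStair_succ, List.countP_cons, ih]
    by_cases h : j < 2*n+1 <;> simp [h] <;> omega

lemma hookLen_oddStair {i k : ℕ} (h : i < k) (j : ℕ) :
    hookLen (oddStair k) i j = (2*(k-1-i)+1 - j) + ((k-1-i) - (j+1)/2) := by
  rw [hookLen, oddStair_getD h, oddStair_drop, oddStair_countP]
  congr 2
  omega

lemma mem_hookset_iff {k h : ℕ} :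
    h ∈ hookset (oddStair k) ↔
      ∃ i j, i < k ∧ j < 2*(k-1-i)+1 ∧ h = (2*(k-1-i)+1 - j) + ((k-1-i) - (j+1)/2) := by
  constructor
  · rintro ⟨i, j, hi, hj, rfl⟩
    rw [oddStair_length] at hi
    rw [oddStair_getD hi] at hj
    exact ⟨i, j, hi, hj, hookLen_oddStair hi j⟩
  · rintro ⟨i, j, hi, hj, rfl⟩
    exact ⟨i, j, by simpa using hi, by rw [oddStair_getD hi]; exact hj,
      (hookLen_oddStair hi j).symm⟩

theorem stmt15 (k : ℕ) :
    IsPartitionList (oddStair k) ∧ IsCore (oddStair k) 3 ∧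
    hookset (oddStair k) = {h | 0 < h ∧ ¬ 3 ∣ h ∧ h ≤ 3 * k - 2} ∧
    (oddStair k).sum = k ^ 2 := by
  refine ⟨⟨?_, ?_⟩, ?_, ?_, ?_⟩
  · -- sorted
    induction k with
    | zero => simp [oddStair]
    | succ k ih =>
      rw [oddStair_succ, List.pairwise_cons]
      refine ⟨fun b hb => ?_, ih⟩
      obtain ⟨a, ha, rfl⟩ := oddStair_mem hb
      omega
  · intro p hp
    obtain ⟨a, _, rfl⟩ := oddStair_mem hp
    omega
  · -- core
    intro h hh
    rw [mem_hookset_iff] at hh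
    obtain ⟨i, j, hi, hj, rfl⟩ := hh
    omega
  · -- hookset
    ext h
    rw [mem_hookset_iff]
    simp only [Set.mem_setOf_eq]
    constructor
    · rintro ⟨i, j, hi, hj, rfl⟩
      omega
    · rintro ⟨h1, h2, h3⟩
      have hm : h % 3 = 1 ∨ h % 3 = 2 := by omega
      rcases hm with hm | hm
      · exact ⟨k - 1 - h/3, 0, by omega, by omega, by omega⟩
      · exact ⟨k - 2 - h/3, 1, by omega, by omega, by omega⟩
  · -- sum
    induction k with
    | zero => simp [oddStair]
    | succ k ih => rw [oddStair_succ, List.sum_cons, ih]; ring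
end

section
/- Let λ be a partition whose profile path, starting at the bottom-left corner, consists of e east steps and n north steps with e = n (largest part equals number of parts), and suppose for a given positive integer s < e + n the path lies strictly above the diagonal at the point s steps from the start and at the point s steps from the end. Then λ has a hook of length s. -/
open scoped Classical

namespace S16

/-- position of the north step of row `a`. -/
def NN (l : List ℕ) (k a : ℕ) : ℕ := l.getD a 0 + (k - 1 - a)

def north (l : List ℕ) (k i : ℕ) : Prop := ∃ a, a < k ∧ i = NN l k a

noncomputable def eastF (l : List ℕ) (k p : ℕ) : Finset ℕ :=
  (Finset.range p).filter (fun i => ¬ north l k i)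

noncomputable def northF (l : List ℕ) (k p : ℕ) : Finset ℕ :=
  (Finset.range p).filter (fun i => north l k i)

lemma card_split (l : List ℕ) (k p : ℕ) :
    (northF l k p).card + (eastF l k p).card = p := by
  have := Finset.card_filter_add_card_filter_not
    (s := Finset.range p) (p := fun i => north l k i)
  simpa [northF, eastF] using this

lemma getD_anti {l : List ℕ} (hl : l.Pairwise (· ≥ ·)) {a a' : ℕ} (h : a ≤ a') :
    l.getD a' 0 ≤ l.getD a 0 := by
  by_cases h' : a' < l.length
  · have ha : a < l.length := lt_of_le_of_lt h h'
    rw [List.getD_eq_getElem l 0 h', List.getD_eq_getElem l 0 ha]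
    rcases eq_or_lt_of_le h with rfl | hlt
    · exact le_refl _
    · exact List.Pairwise.rel_get_of_lt hl (show (⟨a, ha⟩ : Fin l.length) < ⟨a', h'⟩ from hlt)
  · rw [List.getD_eq_default l 0 (le_of_not_gt h')]
    exact Nat.zero_le _

lemma NN_anti {l : List ℕ} (hl : l.Pairwise (· ≥ ·)) {k a a' : ℕ}
    (h : a < a') (h' : a' < k) : NN l k a' < NN l k a := by
  have := getD_anti hl (le_of_lt h)
  simp only [NN]
  omega

lemma NN_le {l : List ℕ} (hl : l.Pairwise (· ≥ ·)) {k a a' : ℕ}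
    (h : a ≤ a') (h' : a' < k) : NN l k a' ≤ NN l k a := by
  rcases eq_or_lt_of_le h with rfl | hlt
  · exact le_refl _
  · exact le_of_lt (NN_anti hl hlt h')

/-- North steps below position `p ≤ NN a` all come from rows `> a`. -/
lemma northF_eq {l : List ℕ} (hl : l.Pairwise (· ≥ ·)) {k a : ℕ} (ha : a < k)
    {p : ℕ} (hp : p ≤ NN l k a) :
    northF l k p =
      (((Finset.range (k - (a+1))).filter
        (fun t => NN l k (a+1+t) < p)).image (fun t => NN l k (a+1+t))) := by
  ext x
  simp only [northF, Finset.mem_filter, Finset.mem_range, Finset.mem_image]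
  simp only [north]
  constructor
  · rintro ⟨hx, a', ha', rfl⟩
    have haa : a < a' := by
      by_contra hc
      have := NN_le hl (le_of_not_gt hc) ha
      omega
    exact ⟨a' - (a+1), ⟨by omega, by rw [show a+1+(a'-(a+1)) = a' by omega]; exact hx⟩,
      by rw [show a+1+(a'-(a+1)) = a' by omega]⟩
  · rintro ⟨t, ⟨ht, htp⟩, rfl⟩
    exact ⟨htp, a+1+t, by omega, rfl⟩

lemma northF_card {l : List ℕ} (hl : l.Pairwise (· ≥ ·)) {k a : ℕ} (ha : a < k)
    {p : ℕ} (hp : p ≤ NN l k a) :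
    (northF l k p).card =
      ((Finset.range (k - (a+1))).filter (fun t => NN l k (a+1+t) < p)).card := by
  rw [northF_eq hl ha hp]
  apply Finset.card_image_of_injOn
  intro t ht t' ht' hEq
  simp only [Finset.mem_coe, Finset.mem_filter, Finset.mem_range] at ht ht'
  by_contra hne
  rcases Nat.lt_or_ge t t' with h | h
  · exact absurd hEq (Nat.ne_of_gt (NN_anti hl (by omega) (by omega)))
  · exact absurd hEq (Nat.ne_of_lt (NN_anti hl (by omega) (by omega)))

/-- There are exactly `l[a]` east steps below the north step of row `a`. -/
lemma eastF_card {l : List ℕ} (hl : l.Pairwise (· ≥ ·)) {k a : ℕ} (ha : a < k) :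
    (eastF l k (NN l k a)).card = l.getD a 0 := by
  have h1 := card_split l k (NN l k a)
  have h2 := northF_card hl ha (le_refl (NN l k a))
  have h3 : (Finset.range (k - (a+1))).filter (fun t => NN l k (a+1+t) < NN l k a)
      = Finset.range (k - (a+1)) := by
    apply Finset.filter_true_of_mem
    intro t ht
    simp only [Finset.mem_range] at ht
    exact NN_anti hl (by omega) (by omega)
  rw [h3, Finset.card_range] at h2
  simp only [NN] at h1 h2 ⊢
  omega

lemma countP_eq (p : ℕ → Bool) (m : List ℕ) :
    m.countP p = ((Finset.range m.length).filter (fun t => p (m.getD t 0) = true)).card := by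
  induction m with
  | nil => simp
  | cons x m ih =>
    rw [List.countP_cons, Finset.card_filter, List.length_cons, Finset.sum_range_succ']
    simp only [List.getD_cons_succ, List.getD_cons_zero]
    rw [← Finset.card_filter, ← ih]


/-- complementarity: column `b` reaches row `a'` iff the north step of `a'` is after `i`. -/
lemma comp {l : List ℕ} (hl : l.Pairwise (· ≥ ·)) {k i : ℕ}
    (hei : ¬ north l k i) {a' : ℕ} (ha' : a' < k) :
    (eastF l k i).card < l.getD a' 0 ↔ ¬ (NN l k a' < i) := by
  constructor
  · intro hb
    intro hlt
    have hsub : eastF l k (NN l k a') ⊆ eastF l k i := by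
      apply Finset.filter_subset_filter
      exact Finset.range_subset_range.mpr (le_of_lt hlt)
    have := Finset.card_le_card hsub
    rw [eastF_card hl ha'] at this
    omega
  · intro hge
    have hne : i ≠ NN l k a' := fun hEq => hei ⟨a', ha', hEq⟩
    have hilt : i < NN l k a' := by omega
    have hsub : insert i (eastF l k i) ⊆ eastF l k (NN l k a') := by
      intro x hx
      rcases Finset.mem_insert.mp hx with rfl | hx
      · simp only [eastF, Finset.mem_filter, Finset.mem_range]
        exact ⟨hilt, hei⟩
      · simp only [eastF, Finset.mem_filter, Finset.mem_range] at hx ⊢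
        exact ⟨by omega, hx.2⟩
    have hni : i ∉ eastF l k i := by
      simp [eastF]
    have := Finset.card_le_card hsub
    rw [Finset.card_insert_of_notMem hni, eastF_card hl ha'] at this
    omega

/-- Key lemma: an east step `i` before the north step of row `a` yields a hook. -/
lemma key {l : List ℕ} (hl : l.Pairwise (· ≥ ·)) {k : ℕ} (hk : l.length = k)
    {a i : ℕ} (ha : a < k) (hi : i < NN l k a) (hei : ¬ north l k i) :
    NN l k a - i ∈ hookset l := by
  set b := (eastF l k i).card with hb
  -- b < l[a]
  have hbl : b < l.getD a 0 := (comp hl hei ha).mpr (by omega)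
  refine ⟨a, b, by omega, hbl, ?_⟩
  -- compute the countP term
  have hlen : (l.drop (a+1)).length = k - (a+1) := by
    rw [List.length_drop, hk]
  have hgetD : ∀ t, t < k - (a+1) → (l.drop (a+1)).getD t 0 = l.getD (a+1+t) 0 := by
    intro t ht
    have h1 : t < (l.drop (a+1)).length := by omega
    have h2 : a+1+t < l.length := by omega
    rw [List.getD_eq_getElem _ 0 h1, List.getD_eq_getElem _ 0 h2]
    rw [List.getElem_drop]
  have hcount : (l.drop (a+1)).countP (fun x => decide (b < x)) =
      ((Finset.range (k - (a+1))).filter (fun t => b < l.getD (a+1+t) 0)).card := by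
    rw [countP_eq, hlen]
    congr 1
    apply Finset.filter_congr
    intro t ht
    simp only [Finset.mem_range] at ht
    rw [hgetD t ht]
    simp
  set c := ((Finset.range (k - (a+1))).filter (fun t => b < l.getD (a+1+t) 0)).card with hc
  set d := ((Finset.range (k - (a+1))).filter (fun t => NN l k (a+1+t) < i)).card with hd
  -- c + d = k - (a+1)
  have hcd : c + d = k - (a+1) := by
    have := Finset.card_filter_add_card_filter_not
      (s := Finset.range (k - (a+1))) (p := fun t => b < l.getD (a+1+t) 0)
    rw [Finset.card_range] at this
    have hneq : (Finset.range (k - (a+1))).filter (fun t => ¬ b < l.getD (a+1+t) 0)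
        = (Finset.range (k - (a+1))).filter (fun t => NN l k (a+1+t) < i) := by
      apply Finset.filter_congr
      intro t ht
      simp only [Finset.mem_range] at ht
      have hiff := comp hl hei (a' := a+1+t) (by omega) (k := k)
      constructor
      · intro h; by_contra h'; exact h (hiff.mpr h')
      · intro h h'; exact absurd h (hiff.mp h')
    rw [hneq] at this
    omega
  -- d = number of north steps below i
  have hdi : (northF l k i).card = d := by
    rw [northF_card hl ha (le_of_lt hi), hd]
  have hbd : d + b = i := by
    have := card_split l k i
    rw [hdi] at this
    exact this
  show NN l k a - i =
    (l.getD a 0 - b) + (l.drop (a+1)).countP (fun x => decide (b < x))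
  rw [hcount]
  simp only [NN] at hi ⊢
  omega

end S16

theorem stmt16 (l : List ℕ) (hl : IsPartitionList l) (k : ℕ)
    (hk : l.length = k) (hsquare : l.getD 0 0 = k)
    (s : ℕ) (hs : 0 < s) (hs' : s < 2 * k)
    (hstart : s < 2 * {i : ℕ | i < s ∧ i ∈ pathSet l}.ncard)
    (hend : s < 2 * {i : ℕ | 2 * k - s ≤ i ∧ i < 2 * k ∧ i ∉ pathSet l}.ncard) :
    s ∈ hookset l := by
  classical
  by_contra hcon
  have hsorted : l.Pairwise (· ≥ ·) := hl.1
  -- pathSet membership in terms of `north`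
  have hpath : ∀ i, i ∈ pathSet l ↔ ¬ S16.north l k i := by
    intro i
    simp only [pathSet, Set.mem_setOf_eq, S16.north, S16.NN, hk]
  -- if no hook of length s, east steps propagate by +s
  have hstep : ∀ i, ¬ S16.north l k i → ¬ S16.north l k (i + s) := by
    intro i hei hni
    obtain ⟨a, ha, hia⟩ := hni
    have hilt : i < S16.NN l k a := by omega
    have := S16.key hsorted hk ha hilt hei
    rw [show S16.NN l k a - i = s by omega] at this
    exact hcon this
  have hiter : ∀ m i, ¬ S16.north l k i → ¬ S16.north l k (i + s * m) := by
    intro m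
    induction m with
    | zero => intro i h; simpa using h
    | succ m ih =>
      intro i h
      have := hstep _ (ih i h)
      rw [show i + s * m + s = i + s * (m+1) by ring] at this
      exact this
  -- finset versions of the hypotheses
  set E : Finset ℕ := (Finset.range s).filter (fun i => ¬ S16.north l k i) with hE
  have hEcard : s < 2 * E.card := by
    have : {i : ℕ | i < s ∧ i ∈ pathSet l} = ↑E := by
      ext i
      simp only [Set.mem_setOf_eq, hE, Finset.coe_filter, Finset.mem_range, hpath]
    rw [this, Set.ncard_coe_finset] at hstart
    exact hstart
  set W : Finset ℕ := Finset.Ico (2*k - s) (2*k) with hW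
  set F1 : Finset ℕ := W.filter (fun i => ¬ S16.north l k i) with hF1
  set F2 : Finset ℕ := W.filter (fun i => S16.north l k i) with hF2
  have hF2card : s < 2 * F2.card := by
    have : {i : ℕ | 2 * k - s ≤ i ∧ i < 2 * k ∧ i ∉ pathSet l} = ↑F2 := by
      ext i
      simp only [Set.mem_setOf_eq, hF2, Finset.coe_filter, hW, Finset.mem_Ico, hpath,
        not_not]
      tauto
    rw [this, Set.ncard_coe_finset] at hend
    exact hend
  have hWcard : W.card = s := by
    rw [hW, Nat.card_Ico]
    omega
  have hsplit : F2.card + F1.card = s := by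
    have := Finset.card_filter_add_card_filter_not
      (s := W) (p := fun i => S16.north l k i)
    rw [hWcard] at this
    simpa [hF1, hF2] using this
  -- inject E into F1 via i ↦ i + s * ((2k-1-i)/s)
  have hcard_le : E.card ≤ F1.card := by
    apply Finset.card_le_card_of_injOn (fun i => i + s * ((2*k - 1 - i)/s))
    · intro i hi
      simp only [hE, Finset.mem_coe, Finset.mem_filter, Finset.mem_range] at hi
      obtain ⟨his, hei⟩ := hi
      have heast := hiter ((2*k - 1 - i)/s) i hei
      have hdm := Nat.div_add_mod (2*k - 1 - i) s
      have hmlt : (2*k - 1 - i) % s < s := Nat.mod_lt _ hs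
      simp only [hF1, Finset.mem_coe, Finset.mem_filter, hW, Finset.mem_Ico]
      refine ⟨⟨by omega, by omega⟩, heast⟩
    · intro i hi j hj hEq
      simp only [hE, Finset.coe_filter, Set.mem_setOf_eq, Finset.mem_range] at hi hj
      have hEq2 : i + s * ((2*k - 1 - i)/s) = j + s * ((2*k - 1 - j)/s) := hEq
      have h1 : i % s = j % s := by
        have e1 : (i + s * ((2*k - 1 - i)/s)) % s = i % s := Nat.add_mul_mod_self_left _ _ _
        have e2 : (j + s * ((2*k - 1 - j)/s)) % s = j % s := Nat.add_mul_mod_self_left _ _ _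
        rw [← e1, ← e2, hEq2]
      rwa [Nat.mod_eq_of_lt hi.1, Nat.mod_eq_of_lt hj.1] at h1
  omega
end

section
/- Let λ be a self-conjugate-shaped partition with largest part equal to the number of parts k, such that the i-th smallest part is strictly greater than i for all 1 ≤ i < k (a strict Dyck path partition). Then the hookset of λ is exactly {1, 2, ..., 2k-1}, an initial segment of the positive integers. -/
/-- beta-number of row `i`. -/
def bfun (l : List ℕ) (k i : ℕ) : ℕ := l.getD i 0 + (k - 1 - i)

/-- position of the east step of column `j`. -/
def efun (l : List ℕ) (j : ℕ) : ℕ := j + l.countP (fun a => decide (a ≤ j))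

lemma countP_eq_card_aux (m : List ℕ) (p : ℕ → Bool) :
    m.countP p = ((Finset.range m.length).filter (fun i => p (m.getD i 0))).card := by
  induction m with
  | nil => simp
  | cons a t ih =>
    rw [List.countP_cons, ih, Finset.card_filter, Finset.card_filter,
      List.length_cons, Finset.sum_range_succ']
    simp

theorem stmt17 (l : List ℕ) (hl : IsPartitionList l) (k : ℕ) (hk : 0 < k)
    (hlen : l.length = k) (htop : l.getD 0 0 = k)
    (hstrict : ∀ i : ℕ, 1 ≤ i → i < k → i < l.getD (k - i) 0) :
    hookset l = {h | 0 < h ∧ h ≤ 2 * k - 1} := by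
  obtain ⟨hsort, hpos⟩ := hl
  have hget : ∀ a b : ℕ, a ≤ b → b < k → l.getD b 0 ≤ l.getD a 0 := by
    intro a b hab hb
    have ha' : a < l.length := by omega
    have hb' : b < l.length := by omega
    rw [List.getD_eq_getElem l 0 ha', List.getD_eq_getElem l 0 hb']
    rcases eq_or_lt_of_le hab with rfl | h
    · exact le_rfl
    · exact List.pairwise_iff_getElem.1 hsort a b ha' hb' h
  have hposa : ∀ a, a < k → 0 < l.getD a 0 := by
    intro a ha
    have ha' : a < l.length := by omega
    rw [List.getD_eq_getElem l 0 ha']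
    exact hpos _ (List.getElem_mem ha')
  have htopa : ∀ a, a < k → l.getD a 0 ≤ k := by
    intro a ha
    calc l.getD a 0 ≤ l.getD 0 0 := hget 0 a (by omega) ha
      _ = k := htop
  have hstrict' : ∀ a, 1 ≤ a → a < k → k - a < l.getD a 0 := by
    intro a h1 h2
    have := hstrict (k - a) (by omega) (by omega)
    rwa [show k - (k - a) = a by omega] at this
  have hcnt : ∀ p : ℕ → Bool,
      l.countP p = ((Finset.range k).filter (fun i => p (l.getD i 0))).card := by
    intro p; rw [countP_eq_card_aux, hlen]
  -- hook length identity
  have hookA : ∀ i j, i < k → j < l.getD i 0 →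
      hookLen l i j + efun l j = bfun l k i := by
    intro i j hi hj
    unfold hookLen efun bfun
    have hsplit : l.countP (fun a => decide (a ≤ j))
        = (l.take (i+1)).countP (fun a => decide (a ≤ j))
          + (l.drop (i+1)).countP (fun a => decide (a ≤ j)) := by
      rw [← List.countP_append, List.take_append_drop]
    have htake : (l.take (i+1)).countP (fun a => decide (a ≤ j)) = 0 := by
      rw [List.countP_eq_zero]
      intro x hx
      obtain ⟨m, hm, hxm⟩ := List.mem_iff_getElem.1 hx
      have hmlen : m < l.length := lt_of_lt_of_le hm (by simp [List.length_take])
      have hmi : m ≤ i := by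
        have : m < min (i+1) l.length := by simpa [List.length_take] using hm
        omega
      have hxval : x = l.getD m 0 := by
        rw [List.getD_eq_getElem l 0 hmlen, ← hxm, List.getElem_take]
      have : l.getD i 0 ≤ l.getD m 0 := hget m i hmi hi
      simp only [decide_eq_true_eq]
      omega
    have hlendrop := List.length_eq_countP_add_countP
      (fun a => decide (j < a)) (l := l.drop (i+1))
    have hnot : (l.drop (i+1)).countP (fun a => ¬ decide (j < a))
        = (l.drop (i+1)).countP (fun a => decide (a ≤ j)) := by
      apply List.countP_congr
      intro x _
      simp only [decide_eq_true_eq, Bool.not_eq_true', decide_eq_false_iff_not, not_lt]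
    have hdl : (l.drop (i+1)).length = k - (i+1) := by
      rw [List.length_drop, hlen]
    rw [hnot, hdl] at hlendrop
    omega
  -- cell existence from position comparison
  have hookB : ∀ i j, i < k → efun l j < bfun l k i → j < l.getD i 0 := by
    intro i j hi hEB
    by_contra hc
    push_neg at hc
    have hcge : k - i ≤ l.countP (fun a => decide (a ≤ j)) := by
      rw [hcnt]
      have hsub : Finset.Ico i k
          ⊆ (Finset.range k).filter (fun a => decide (l.getD a 0 ≤ j)) := by
        intro a ha
        simp only [Finset.mem_Ico] at ha
        simp only [Finset.mem_filter, Finset.mem_range, decide_eq_true_eq]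
        exact ⟨ha.2, le_trans (hget i a ha.1 ha.2) hc⟩
      have := Finset.card_le_card hsub
      rwa [Nat.card_Ico] at this
    unfold efun bfun at hEB
    omega
  have hE0 : efun l 0 = 0 := by
    unfold efun
    rw [List.countP_eq_zero.2]
    intro x hx
    simp only [decide_eq_true_eq]
    exact Nat.not_le.2 (hpos x hx)
  have hEmono : ∀ j j', j < j' → efun l j < efun l j' := by
    intro j j' h
    unfold efun
    have : l.countP (fun a => decide (a ≤ j)) ≤ l.countP (fun a => decide (a ≤ j')) := by
      apply List.countP_mono_left
      intro x _ hxj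
      simp only [decide_eq_true_eq] at *
      omega
    omega
  have hEub : ∀ j, j < k → efun l j ≤ 2*j := by
    intro j hj
    rcases Nat.eq_zero_or_pos j with rfl | h1
    · omega
    · unfold efun
      rw [hcnt]
      have hsub : (Finset.range k).filter (fun a => decide (l.getD a 0 ≤ j))
          ⊆ Finset.Ico (k+1-j) k := by
        intro a ha
        simp only [Finset.mem_filter, Finset.mem_range, decide_eq_true_eq] at ha
        simp only [Finset.mem_Ico]
        rcases Nat.eq_zero_or_pos a with rfl | ha1
        · rw [htop] at ha; omega
        · have := hstrict' a ha1 ha.1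
          constructor <;> omega
      have := Finset.card_le_card hsub
      rw [Nat.card_Ico] at this
      omega
  have hβ0 : bfun l k 0 = 2*k - 1 := by unfold bfun; rw [htop]; omega
  have hβub : ∀ i, i < k → bfun l k i ≤ 2*k-1 := by
    intro i hi; have := htopa i hi; unfold bfun; omega
  have hβlb : ∀ i, 1 ≤ i → i < k → 2*(k-i) ≤ bfun l k i := by
    intro i h1 h2; have := hstrict' i h1 h2; unfold bfun; omega
  have hβinj : ∀ a b, a < k → b < k → bfun l k a = bfun l k b → a = b := by
    intro a b ha hb hab
    by_contra hne
    unfold bfun at hab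
    rcases Nat.lt_or_ge a b with h | h
    · have := hget a b (le_of_lt h) hb; omega
    · have hba : b < a := by omega
      have := hget b a (le_of_lt hba) ha; omega
  -- every value in [1, 2k-1] is attained as a difference
  have hexists : ∀ d, 0 < d → d ≤ 2*k-1 →
      ∃ i j, i < k ∧ j < k ∧ bfun l k i = efun l j + d := by
    intro d hd1 hd2
    by_contra hcon
    push_neg at hcon
    set S := ((Finset.range k).filter (fun j => efun l j + d ≤ 2*k-1)).image
      (fun j => efun l j + d) with hS
    set T := ((Finset.range k).filter (fun i => d ≤ bfun l k i)).image
      (fun i => bfun l k i) with hT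
    have hdisj : Disjoint S T := by
      rw [Finset.disjoint_left]
      intro x hxS hxT
      simp only [hS, hT, Finset.mem_image, Finset.mem_filter, Finset.mem_range] at hxS hxT
      obtain ⟨j, ⟨hj, _⟩, rfl⟩ := hxS
      obtain ⟨i, ⟨hi, _⟩, heq⟩ := hxT
      exact hcon i j hi hj heq
    have hsub : S ∪ T ⊆ Finset.Icc d (2*k-1) := by
      intro x hx
      simp only [Finset.mem_union, hS, hT, Finset.mem_image, Finset.mem_filter,
        Finset.mem_range] at hx
      simp only [Finset.mem_Icc]
      rcases hx with ⟨j, ⟨hj, hj2⟩, rfl⟩ | ⟨i, ⟨hi, hi2⟩, rfl⟩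
      · omega
      · exact ⟨hi2, hβub i hi⟩
    have hcard : S.card + T.card ≤ 2*k - d := by
      have h1 := Finset.card_le_card hsub
      rw [Finset.card_union_of_disjoint hdisj, Nat.card_Icc] at h1
      omega
    have hScard : (2*k+1-d)/2 ≤ S.card := by
      rw [hS, Finset.card_image_of_injOn]
      · have hsub2 : Finset.range ((2*k+1-d)/2)
            ⊆ (Finset.range k).filter (fun j => efun l j + d ≤ 2*k-1) := by
          intro j hj
          rw [Finset.mem_range] at hj
          have hjk : j < k := by omega
          have := hEub j hjk
          simp only [Finset.mem_filter, Finset.mem_range]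
          exact ⟨hjk, by omega⟩
        have := Finset.card_le_card hsub2
        rwa [Finset.card_range] at this
      · intro a ha b hb hab
        simp only at hab
        by_contra hne
        rcases Nat.lt_or_ge a b with h | h
        · have := hEmono a b h; omega
        · have hba : b < a := by omega
          have := hEmono b a hba; omega
    have hTcard : min k ((2*k-d)/2+1) ≤ T.card := by
      rw [hT, Finset.card_image_of_injOn]
      · have hsub2 : Finset.range (min k ((2*k-d)/2+1))
            ⊆ (Finset.range k).filter (fun i => d ≤ bfun l k i) := by
          intro i hi
          rw [Finset.mem_range] at hi
          have hik : i < k := by omega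
          simp only [Finset.mem_filter, Finset.mem_range]
          refine ⟨hik, ?_⟩
          rcases Nat.eq_zero_or_pos i with rfl | h1
          · rw [hβ0]; omega
          · have := hβlb i h1 hik; omega
        have := Finset.card_le_card hsub2
        rwa [Finset.card_range] at this
      · intro a ha b hb hab
        simp only [Finset.coe_filter, Set.mem_setOf_eq, Finset.mem_range] at ha hb
        exact hβinj a b ha.1 hb.1 hab
    omega
  ext h
  simp only [hookset, Set.mem_setOf_eq]
  constructor
  · rintro ⟨i, j, hi, hj, rfl⟩
    rw [hlen] at hi
    have hA := hookA i j hi hj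
    have hub := hβub i hi
    have hpos' : 0 < hookLen l i j := by
      unfold hookLen
      omega
    exact ⟨hpos', by omega⟩
  · rintro ⟨h1, h2⟩
    obtain ⟨i, j, hi, hj, heq⟩ := hexists h h1 h2
    have hcell : j < l.getD i 0 := hookB i j hi (by omega)
    refine ⟨i, j, by omega, hcell, ?_⟩
    have hA := hookA i j hi hcell
    omega
end

section
/- A positive integer s is a hook length of a partition λ if and only if there exists an element x of the associated numerical set S = φ⁻¹(λ) with x + s ∉ S. Consequently, s is not a hook length of λ if and only if s ∈ A(S). -/
/-- If the `k`-th element of a sorted (decreasing) list is `≤ j`, at most `k`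
elements exceed `j`. -/
private lemma cLe : ∀ (m : List ℕ), m.Pairwise (· ≥ ·) → ∀ k j : ℕ, k < m.length →
    m.getD k 0 ≤ j → m.countP (fun a => decide (j < a)) ≤ k := by
  intro m
  induction m with
  | nil => intro _ k j hk _; simp at hk
  | cons x t ih =>
    intro hm k j hk h
    rw [List.countP_cons]
    match k with
    | 0 =>
      rw [List.getD_cons_zero] at h
      have h0 : t.countP (fun a => decide (j < a)) = 0 := by
        rw [List.countP_eq_zero]
        intro a ha
        have hax : a ≤ x := List.rel_of_pairwise_cons hm ha
        simp only [decide_eq_true_eq]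
        omega
      have hx : ¬ (j < x) := by omega
      simp [h0, hx]
    | k + 1 =>
      rw [List.getD_cons_succ] at h
      have hlen : k < t.length := by simp at hk; omega
      have := ih hm.of_cons k j hlen h
      split <;> omega

/-- If the `k`-th element of a sorted (decreasing) list is `> j`, at least `k+1`
elements exceed `j`. -/
private lemma cGe : ∀ (m : List ℕ), m.Pairwise (· ≥ ·) → ∀ k j : ℕ, k < m.length →
    j < m.getD k 0 → k + 1 ≤ m.countP (fun a => decide (j < a)) := by
  intro m
  induction m with
  | nil => intro _ k j hk _; simp at hk
  | cons x t ih =>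
    intro hm k j hk h
    rw [List.countP_cons]
    match k with
    | 0 =>
      rw [List.getD_cons_zero] at h
      simp [h]
    | k + 1 =>
      rw [List.getD_cons_succ] at h
      have hlen : k < t.length := by simp at hk; omega
      have h1 := ih hm.of_cons k j hlen h
      have hmem : t.getD k 0 ∈ t := by
        rw [List.getD_eq_getElem t 0 hlen]; exact List.getElem_mem _
      have hx : t.getD k 0 ≤ x := List.rel_of_pairwise_cons hm hmem
      have hjx : j < x := by omega
      simp [hjx]
      omega

/-- The east-step position corresponding to column `j` of row `i`. -/
private def gfun (l : List ℕ) (i j : ℕ) : ℕ :=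
  j + (l.length - 1 - i - (l.drop (i + 1)).countP (fun a => decide (j < a)))

private lemma cnt_le (l : List ℕ) (i j : ℕ) :
    (l.drop (i + 1)).countP (fun a => decide (j < a)) ≤ l.length - 1 - i := by
  have h := List.countP_le_length (p := fun a => decide (j < a)) (l := l.drop (i + 1))
  rw [List.length_drop] at h
  omega

private lemma gsum (l : List ℕ) {i j : ℕ} (hi : i < l.length) (hj : j < l.getD i 0) :
    gfun l i j + hookLen l i j = l.getD i 0 + (l.length - 1 - i) := by
  have h1 := cnt_le l i j
  unfold gfun hookLen
  omega

private lemma gne (l : List ℕ) (hsort : l.Pairwise (· ≥ ·)) {i j b : ℕ}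
    (hi : i < l.length) (hj : j < l.getD i 0) (hb : b < l.length) :
    gfun l i j ≠ l.getD b 0 + (l.length - 1 - b) := by
  intro heq
  have hd : (l.drop (i + 1)).Pairwise (· ≥ ·) := hsort.sublist (List.drop_sublist _ _)
  rcases Nat.lt_or_ge i b with hib | hbi
  · have hk : b - i - 1 < (l.drop (i + 1)).length := by rw [List.length_drop]; omega
    have hgetd : (l.drop (i + 1)).getD (b - i - 1) 0 = l.getD b 0 := by
      rw [List.getD_eq_getElem _ 0 hk, List.getD_eq_getElem _ 0 hb, List.getElem_drop]
      congr 1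
      omega
    rcases Nat.lt_or_ge j (l.getD b 0) with hc | hc
    · have h2 := cGe _ hd (b - i - 1) j hk (by rw [hgetd]; exact hc)
      have hle := cnt_le l i j
      unfold gfun at heq
      omega
    · have h2 := cLe _ hd (b - i - 1) j hk (by rw [hgetd]; exact hc)
      unfold gfun at heq
      omega
  · have h1 : l.getD i 0 ≤ l.getD b 0 := by
      rcases Nat.eq_or_lt_of_le hbi with h | h
      · rw [h]
      · rw [List.getD_eq_getElem _ 0 hi, List.getD_eq_getElem _ 0 hb]
        exact List.pairwise_iff_getElem.mp hsort b i hb hi h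
    have hle := cnt_le l i j
    unfold gfun at heq
    omega

private lemma gmono (l : List ℕ) (i : ℕ) {j1 j2 : ℕ} (h : j1 < j2) :
    gfun l i j1 < gfun l i j2 := by
  have hmc : (l.drop (i + 1)).countP (fun a => decide (j2 < a)) ≤
      (l.drop (i + 1)).countP (fun a => decide (j1 < a)) := by
    apply List.countP_mono_left
    intro a _ ha
    simp only [decide_eq_true_eq] at ha ⊢
    omega
  have h1 := cnt_le l i j1
  unfold gfun
  omega

theorem stmt18 (l : List ℕ) (S : Set ℕ) (hl : IsPartitionList l)
    (hS : NumericalSet S) (hφ : pathSet l = S) (s : ℕ) (hs : 0 < s) :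
    (s ∈ hookset l ↔ ∃ x ∈ S, x + s ∉ S) ∧
    (s ∉ hookset l ↔ s ∈ atomMonoid S) := by
  classical
  obtain ⟨hsort, hpos⟩ := hl
  subst hφ
  have key : s ∈ hookset l ↔ ∃ x ∈ pathSet l, x + s ∉ pathSet l := by
    constructor
    · rintro ⟨i, j, hi, hj, hse⟩
      refine ⟨gfun l i j, ?_, ?_⟩
      · simp only [pathSet, Set.mem_setOf_eq, not_exists, not_and]
        intro b hb
        exact gne l hsort hi hj hb
      · simp only [pathSet, Set.mem_setOf_eq, not_not]
        exact ⟨i, hi, by rw [hse, gsum l hi hj]⟩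
    · rintro ⟨x, hxS, hxN⟩
      rw [pathSet, Set.mem_setOf_eq, not_not] at hxN
      obtain ⟨i, hi, hxi⟩ := hxN
      rw [pathSet, Set.mem_setOf_eq] at hxS
      push_neg at hxS
      -- injectivity of gfun on range
      have hginj : Set.InjOn (gfun l i) ↑(Finset.range (l.getD i 0)) := by
        intro a _ b _ hab
        rcases lt_trichotomy a b with h | h | h
        · exact absurd hab (gmono l i h).ne
        · exact h
        · exact absurd hab.symm (gmono l i h).ne
      set A := (Finset.range (l.getD i 0)).image (gfun l i) with hA
      have hcardA : A.card = l.getD i 0 := by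
        rw [hA, Finset.card_image_of_injOn hginj, Finset.card_range]
      have hanti : ∀ a b : ℕ, a < b → b < l.length →
          l.getD b 0 + (l.length - 1 - b) < l.getD a 0 + (l.length - 1 - a) := by
        intro a b hab hb
        have : l.getD b 0 ≤ l.getD a 0 := by
          rw [List.getD_eq_getElem _ 0 hb, List.getD_eq_getElem _ 0 (hab.trans hb)]
          exact List.pairwise_iff_getElem.mp hsort a b (hab.trans hb) hb hab
        omega
      set C := (Finset.Ioo i l.length).image
        (fun a => l.getD a 0 + (l.length - 1 - a)) with hC
      have hCsub : C ⊆ Finset.range (l.getD i 0 + (l.length - 1 - i)) := by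
        intro y hy
        rw [hC, Finset.mem_image] at hy
        obtain ⟨a, ha, rfl⟩ := hy
        rw [Finset.mem_Ioo] at ha
        exact Finset.mem_range.mpr (hanti i a ha.1 ha.2)
      have hcardC : C.card = l.length - 1 - i := by
        rw [hC, Finset.card_image_of_injOn, Nat.card_Ioo]
        · omega
        · intro a ha b hb hab
          simp only [Finset.coe_Ioo, Set.mem_Ioo] at ha hb
          rcases lt_trichotomy a b with h | h | h
          · exact absurd hab (hanti a b h hb.2).ne'
          · exact h
          · exact absurd hab (hanti b a h ha.2).ne
      have hB : A ⊆ Finset.range (l.getD i 0 + (l.length - 1 - i)) \ C := by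
        intro y hy
        rw [hA, Finset.mem_image] at hy
        obtain ⟨j, hj, rfl⟩ := hy
        rw [Finset.mem_range] at hj
        rw [Finset.mem_sdiff]
        constructor
        · rw [Finset.mem_range]
          have h1 := gsum l hi hj
          have h2 : 0 < hookLen l i j := by
            unfold hookLen
            omega
          omega
        · intro hmem
          rw [hC, Finset.mem_image] at hmem
          obtain ⟨a, ha, heq⟩ := hmem
          rw [Finset.mem_Ioo] at ha
          exact gne l hsort hi hj ha.2 heq.symm
      have hcardB : (Finset.range (l.getD i 0 + (l.length - 1 - i)) \ C).card
          = l.getD i 0 := by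
        rw [Finset.card_sdiff_of_subset hCsub, Finset.card_range, hcardC]
        omega
      have hAeq : A = Finset.range (l.getD i 0 + (l.length - 1 - i)) \ C :=
        Finset.eq_of_subset_of_card_le hB (by rw [hcardB, hcardA])
      have hxmem : x ∈ Finset.range (l.getD i 0 + (l.length - 1 - i)) \ C := by
        rw [Finset.mem_sdiff, Finset.mem_range]
        refine ⟨by omega, ?_⟩
        intro hmem
        rw [hC, Finset.mem_image] at hmem
        obtain ⟨a, ha, heq⟩ := hmem
        rw [Finset.mem_Ioo] at ha
        exact hxS a ha.2 heq.symm
      rw [← hAeq, hA, Finset.mem_image] at hxmem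
      obtain ⟨j, hj, hgx⟩ := hxmem
      rw [Finset.mem_range] at hj
      refine ⟨i, j, hi, hj, ?_⟩
      have h1 := gsum l hi hj
      omega
  refine ⟨key, ?_⟩
  constructor
  · intro h
    rw [key] at h
    push_neg at h
    intro x hx
    rw [add_comm]
    exact h x hx
  · intro h
    rw [key]
    push_neg
    intro x hx
    have := h x hx
    rwa [add_comm] at this
end
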